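/- arXiv:2302.05627 — 8 statements merged into one kernel-verified Lean document; each statement's English description precedes it below -/
import Mathlib

section
/- Let (Ω, μ) be a finite measure space and let f : ℝ → ℝ be Lipschitz continuous with constant L and directionally differentiable at every point of ℝ. Then the induced Nemytskii operator f : L²(μ) → L²(μ), (f(v))(x) := f(v(x)), is directionally differentiable: for all η, h ∈ L²(μ), the difference quotients (f(η + τh) − f(η))/τ converge in the L²(μ)-norm, as τ ↓ 0, to the element of L²(μ) given a.e. by x ↦ f'(η(x); h(x)), where f'(y;d) := lim_{τ↓0}(f(y+τd) − f(y))/τ is the one-dimensional directional derivative (note |f'(y;d)| ≤ L|d|, so this function indeed lies in L²(μ)). -/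
open MeasureTheory Filter Set Topology
open scoped ENNReal NNReal

/-- **Directional differentiability of the Nemytskii operator of a Lipschitz,
directionally differentiable function on `L²(μ)`, `μ` finite.**
Here `N` is the Nemytskii (superposition) operator induced by `f` on `L²(μ)`, and
`f' y d` denotes the one-dimensional directional derivative of `f` at `y` in direction `d`.
The difference quotients `(N(η + τh) − N(η))/τ` converge in `L²(μ)`, as `τ ↓ 0`, to the
element of `L²(μ)` represented a.e. by `x ↦ f'(η(x); h(x))`. -/
theorem nemytskii_directionally_differentiable
    {α : Type*} [MeasurableSpace α] (μ : Measure α) [IsFiniteMeasure μ]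
    (f : ℝ → ℝ) (L : ℝ) (hL : 0 ≤ L)
    (hf : ∀ x y : ℝ, |f x - f y| ≤ L * |x - y|)
    (f' : ℝ → ℝ → ℝ)
    (hf' : ∀ y d : ℝ,
      Tendsto (fun τ : ℝ => (f (y + τ * d) - f y) / τ) (nhdsWithin 0 (Ioi 0)) (nhds (f' y d)))
    (N : Lp ℝ 2 μ → Lp ℝ 2 μ)
    (hN : ∀ v : Lp ℝ 2 μ, (N v : α → ℝ) =ᵐ[μ] fun x => f ((v : α → ℝ) x))
    (η h : Lp ℝ 2 μ) :
    ∃ D : Lp ℝ 2 μ,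
      ((D : α → ℝ) =ᵐ[μ] fun x => f' ((η : α → ℝ) x) ((h : α → ℝ) x)) ∧
      Tendsto (fun τ : ℝ => τ⁻¹ • (N (η + τ • h) - N η)) (nhdsWithin 0 (Ioi 0)) (nhds D) := by
  set l : Filter ℝ := nhdsWithin 0 (Ioi 0) with hl
  set u : α → ℝ := ⇑η
  set v : α → ℝ := ⇑h
  have hu : StronglyMeasurable u := Lp.stronglyMeasurable η
  have hv : StronglyMeasurable v := Lp.stronglyMeasurable h
  have hfc : Continuous f := by
    have : LipschitzWith L.toNNReal f := by
      refine LipschitzWith.of_dist_le_mul fun x y => ?_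
      rw [Real.dist_eq, Real.dist_eq, Real.coe_toNNReal L hL]
      exact hf x y
    exact this.continuous
  -- the difference quotient
  set q : ℝ → α → ℝ := fun τ x => τ⁻¹ * (f (u x + τ * v x) - f (u x)) with hq
  set g : α → ℝ := fun x => f' (u x) (v x) with hg
  -- quotient bound
  have hquot : ∀ τ : ℝ, 0 < τ → ∀ y d : ℝ, |τ⁻¹ * (f (y + τ * d) - f y)| ≤ L * |d| := by
    intro τ hτ y d
    have h1 : |f (y + τ * d) - f y| ≤ L * (τ * |d|) := by
      have := hf (y + τ * d) y
      simpa [abs_mul, abs_of_pos hτ, mul_assoc] using this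
    calc |τ⁻¹ * (f (y + τ * d) - f y)| = τ⁻¹ * |f (y + τ * d) - f y| := by
          rw [abs_mul, abs_of_pos (inv_pos.mpr hτ)]
      _ ≤ τ⁻¹ * (L * (τ * |d|)) := by
          exact mul_le_mul_of_nonneg_left h1 (le_of_lt (inv_pos.mpr hτ))
      _ = L * |d| := by field_simp
  -- pointwise convergence of quotients (in inv-mul form)
  have hconv : ∀ y d : ℝ,
      Tendsto (fun τ : ℝ => τ⁻¹ * (f (y + τ * d) - f y)) l (𝓝 (f' y d)) := by
    intro y d
    have := hf' y d
    refine this.congr fun τ => ?_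
    rw [div_eq_inv_mul]
  -- bound on directional derivative
  have hgb : ∀ y d : ℝ, |f' y d| ≤ L * |d| := by
    intro y d
    have habs : Tendsto (fun τ : ℝ => |τ⁻¹ * (f (y + τ * d) - f y)|) l (𝓝 |f' y d|) :=
      (hconv y d).abs
    refine le_of_tendsto habs ?_
    filter_upwards [self_mem_nhdsWithin] with τ hτ
    exact hquot τ hτ y d
  -- measurability of g
  have hgm : StronglyMeasurable g := by
    have hseq : Tendsto (fun n : ℕ => ((n : ℝ) + 1)⁻¹) atTop l := by
      refine tendsto_nhdsWithin_of_tendsto_nhds_of_eventually_within _ ?_ ?_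
      · exact tendsto_one_div_add_atTop_nhds_zero_nat.congr (by simp [one_div])
      · exact Eventually.of_forall fun n => mem_Ioi.mpr (by positivity)
    refine stronglyMeasurable_of_tendsto atTop
      (f := fun n : ℕ => q ((n:ℝ)+1)⁻¹) (fun n => ?_) ?_
    · exact ((stronglyMeasurable_const.mul
        (((hfc.comp_stronglyMeasurable (hu.add (stronglyMeasurable_const.mul hv))).sub
          (hfc.comp_stronglyMeasurable hu)))))
    · refine tendsto_pi_nhds.mpr fun x => ?_
      exact ((hconv (u x) (v x)).comp hseq)
  -- membership in L²
  have hvb : MemLp (fun x => L * |v x|) 2 μ := by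
    have := (Lp.memLp h).norm.const_mul L
    simpa [Real.norm_eq_abs] using this
  have hgmem : MemLp g 2 μ := by
    refine hvb.of_le hgm.aestronglyMeasurable (Eventually.of_forall fun x => ?_)
    rw [Real.norm_eq_abs, Real.norm_eq_abs,
      abs_of_nonneg (mul_nonneg hL (abs_nonneg _))]
    exact hgb (u x) (v x)
  refine ⟨hgmem.toLp g, hgmem.coeFn_toLp, ?_⟩
  rw [Lp.tendsto_Lp_iff_tendsto_eLpNorm _ g hgmem]
  -- identify the coeFn of the difference quotient in Lp
  have hcoe : ∀ τ : ℝ, eLpNorm (⇑(τ⁻¹ • (N (η + τ • h) - N η)) - g) 2 μ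
      = eLpNorm (fun x => q τ x - g x) 2 μ := by
    intro τ
    refine eLpNorm_congr_ae ?_
    have h1 : ⇑(τ⁻¹ • (N (η + τ • h) - N η)) =ᵐ[μ] q τ := by
      filter_upwards [Lp.coeFn_smul τ⁻¹ (N (η + τ • h) - N η),
        Lp.coeFn_sub (N (η + τ • h)) (N η), hN (η + τ • h), hN η,
        Lp.coeFn_add η (τ • h), Lp.coeFn_smul τ h] with x e1 e2 e3 e4 e5 e6
      simp only [e1, Pi.smul_apply, e2, Pi.sub_apply, e3, e4, smul_eq_mul, hq]
      congr 2
      rw [e5, Pi.add_apply, e6, Pi.smul_apply, smul_eq_mul]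
    exact h1.sub (EventuallyEq.refl _ g)
  have key : Tendsto (fun τ => eLpNorm (fun x => q τ x - g x) 2 μ) l (𝓝 0) := by
    have hrw : ∀ τ : ℝ, eLpNorm (fun x => q τ x - g x) 2 μ
        = (∫⁻ x, (‖q τ x - g x‖₊ : ℝ≥0∞) ^ (2:ℝ) ∂μ) ^ (1/(2:ℝ)) := by
      intro τ
      rw [eLpNorm_eq_lintegral_rpow_enorm_toReal (by norm_num) (by norm_num)]
      norm_num
      rfl
    have hqm : ∀ τ : ℝ, StronglyMeasurable (fun x => q τ x - g x) := by
      intro τ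
      exact (stronglyMeasurable_const.mul
        ((hfc.comp_stronglyMeasurable (hu.add (stronglyMeasurable_const.mul hv))).sub
          (hfc.comp_stronglyMeasurable hu))).sub hgm
    have hlint : Tendsto (fun τ => ∫⁻ x, (‖q τ x - g x‖₊ : ℝ≥0∞) ^ (2:ℝ) ∂μ) l (𝓝 0) := by
      have h0 : (0 : ℝ≥0∞) = ∫⁻ _, (0:ℝ≥0∞) ∂μ := by simp
      rw [h0]
      refine tendsto_lintegral_filter_of_dominated_convergence
        (fun x => (‖2 * (L * |v x|)‖₊ : ℝ≥0∞) ^ (2:ℝ)) ?_ ?_ ?_ ?_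
      · exact Eventually.of_forall fun τ =>
          ENNReal.continuous_rpow_const.measurable.comp (hqm τ).measurable.enorm
      · filter_upwards [self_mem_nhdsWithin] with τ hτ
        refine Eventually.of_forall fun x => ?_
        have hb : |q τ x - g x| ≤ 2 * (L * |v x|) := by
          have h1 := hquot τ hτ (u x) (v x)
          have h2 := hgb (u x) (v x)
          calc |q τ x - g x| ≤ |q τ x| + |g x| := abs_sub _ _
            _ ≤ L * |v x| + L * |v x| := add_le_add h1 h2
            _ = 2 * (L * |v x|) := by ring
        refine ENNReal.rpow_le_rpow ?_ (by norm_num)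
        rw [ENNReal.coe_le_coe]
        have : ‖q τ x - g x‖ ≤ ‖2 * (L * |v x|)‖ := by
          rw [Real.norm_eq_abs, Real.norm_eq_abs,
            abs_of_nonneg (mul_nonneg (by norm_num) (mul_nonneg hL (abs_nonneg _)))]
          exact hb
        exact_mod_cast this
      · have hvb2 : MemLp (fun x => 2 * (L * |v x|)) 2 μ := hvb.const_mul 2
        have := lintegral_rpow_enorm_lt_top_of_eLpNorm_lt_top (f := fun x => 2 * (L * |v x|))
          (by norm_num) (by norm_num) hvb2.eLpNorm_lt_top
        simpa [enorm_eq_nnnorm] using this.ne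
      · refine Eventually.of_forall fun x => ?_
        have hd : Tendsto (fun τ => q τ x - g x) l (𝓝 0) := by
          have := (hconv (u x) (v x)).sub_const (g x)
          simpa [hq, hg] using this
        have hcont : Continuous fun r : ℝ => (‖r‖₊ : ℝ≥0∞) ^ (2:ℝ) :=
          ENNReal.continuous_rpow_const.comp (ENNReal.continuous_coe.comp continuous_nnnorm)
        have := (hcont.tendsto 0).comp hd
        simpa [Function.comp_def] using this
    have : Tendsto (fun τ => (∫⁻ x, (‖q τ x - g x‖₊ : ℝ≥0∞) ^ (2:ℝ) ∂μ) ^ (1/(2:ℝ))) l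
        (𝓝 ((0:ℝ≥0∞) ^ (1/(2:ℝ)))) :=
      (ENNReal.continuous_rpow_const.tendsto 0).comp hlint
    rw [show ((0:ℝ≥0∞) ^ (1/(2:ℝ))) = 0 by simp [ENNReal.zero_rpow_of_pos]] at this
    exact this.congr fun τ => (hrw τ).symm
  exact key.congr fun τ => (hcoe τ).symm
end

section
/- Let (Ω, μ) be a measure space and P : L²(μ) → L²(μ) the positive-part (Nemytskii max) operator, P(v) := v⁺ = sup(v, 0) taken pointwise a.e. Then P is directionally differentiable: for all z, h ∈ L²(μ), the quotients (P(z + τh) − P(z))/τ converge in the L²(μ)-norm, as τ ↓ 0, to the element D(z;h) of L²(μ) defined a.e. by D(z;h)(x) = h(x) where z(x) > 0, D(z;h)(x) = max(h(x), 0) where z(x) = 0, and D(z;h)(x) = 0 where z(x) < 0. -/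
open MeasureTheory Filter Set
open scoped ENNReal NNReal

/-- Scalar bound: `|max (a+b) 0 - max a 0| ≤ |b|`. -/
private lemma abs_max_sub_max_le' (a b : ℝ) : |max (a + b) 0 - max a 0| ≤ |b| := by
  simpa using abs_max_sub_max_le_abs (a + b) a 0

/-- **Directional differentiability of the positive-part (Nemytskii max) operator on `L²(μ)`.**
For `z, h ∈ L²(μ)` the quotients `(P(z+τh) − P(z))/τ`, where `P v = v ⊔ 0`, converge in
`L²(μ)`-norm as `τ ↓ 0` to the element `D(z;h)` given a.e. by `h` on `{z > 0}`,
`max(h,0)` on `{z = 0}` and `0` on `{z < 0}`. -/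
theorem posPart_directionally_differentiable
    {α : Type*} [MeasurableSpace α] (μ : Measure α)
    (z h : Lp ℝ 2 μ) :
    ∃ D : Lp ℝ 2 μ,
      ((D : α → ℝ) =ᵐ[μ] fun x =>
        if 0 < (z : α → ℝ) x then (h : α → ℝ) x
        else if (z : α → ℝ) x = 0 then max ((h : α → ℝ) x) 0
        else 0) ∧
      Tendsto (fun τ : ℝ => τ⁻¹ • (((z + τ • h) ⊔ 0) - (z ⊔ 0)))
        (nhdsWithin 0 (Ioi 0)) (nhds D) := by
  classical
  -- measurable representatives
  set z' : α → ℝ := (Lp.aestronglyMeasurable z).mk z with hz'def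
  set h' : α → ℝ := (Lp.aestronglyMeasurable h).mk h with hh'def
  have hz'meas : Measurable z' := ((Lp.aestronglyMeasurable z).stronglyMeasurable_mk).measurable
  have hh'meas : Measurable h' := ((Lp.aestronglyMeasurable h).stronglyMeasurable_mk).measurable
  have hz'ae : (z : α → ℝ) =ᵐ[μ] z' := (Lp.aestronglyMeasurable z).ae_eq_mk
  have hh'ae : (h : α → ℝ) =ᵐ[μ] h' := (Lp.aestronglyMeasurable h).ae_eq_mk
  have hh'mem : MemLp h' 2 μ := (Lp.memLp h).ae_eq hh'ae
  -- the candidate derivative (measurable version)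
  set d : α → ℝ := fun x => if 0 < z' x then h' x else if z' x = 0 then max (h' x) 0 else 0
    with hddef
  have hdmeas : Measurable d := by
    apply Measurable.ite (measurableSet_lt measurable_const hz'meas) hh'meas
    exact Measurable.ite (hz'meas (measurableSet_singleton 0))
      (hh'meas.max measurable_const) measurable_const
  have hdabs : ∀ x, |d x| ≤ |h' x| := by
    intro x
    simp only [hddef]
    split_ifs with h1 h2
    · exact le_rfl
    · rw [abs_of_nonneg (le_max_right _ _)]
      exact max_le (le_abs_self _) (abs_nonneg _)
    · simpa using abs_nonneg (h' x)
  have hd_mem : MemLp d 2 μ :=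
    MemLp.of_le hh'mem hdmeas.aestronglyMeasurable
      (ae_of_all _ fun x => by simpa [Real.norm_eq_abs] using hdabs x)
  refine ⟨hd_mem.toLp d, ?_, ?_⟩
  · filter_upwards [hd_mem.coeFn_toLp, hz'ae, hh'ae] with x hx hzx hhx
    rw [hx, hzx, hhx]
  -- the difference quotient, pointwise
  set φ : ℝ → α → ℝ := fun τ x => τ⁻¹ * (max (z' x + τ * h' x) 0 - max (z' x) 0) with hφdef
  have hφabs : ∀ τ : ℝ, 0 < τ → ∀ x, |φ τ x| ≤ |h' x| := by
    intro τ hτ x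
    have h1 : |max (z' x + τ * h' x) 0 - max (z' x) 0| ≤ τ * |h' x| := by
      simpa [abs_mul, abs_of_pos hτ] using abs_max_sub_max_le' (z' x) (τ * h' x)
    calc |φ τ x| = τ⁻¹ * |max (z' x + τ * h' x) 0 - max (z' x) 0| := by
          simp only [hφdef]; rw [abs_mul, abs_inv, abs_of_pos hτ]
      _ ≤ τ⁻¹ * (τ * |h' x|) := by
          exact mul_le_mul_of_nonneg_left h1 (by positivity)
      _ = |h' x| := by field_simp
  -- a.e. representation of the Lp difference quotient
  have hrep : ∀ τ : ℝ,
      ((τ⁻¹ • (((z + τ • h) ⊔ 0) - (z ⊔ 0)) : Lp ℝ 2 μ) : α → ℝ) =ᵐ[μ] φ τ := by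
    intro τ
    filter_upwards [Lp.coeFn_smul τ⁻¹ (((z + τ • h) ⊔ 0) - (z ⊔ 0)),
      Lp.coeFn_sub ((z + τ • h) ⊔ 0) (z ⊔ 0), Lp.coeFn_sup (z + τ • h) (0 : Lp ℝ 2 μ),
      Lp.coeFn_sup z (0 : Lp ℝ 2 μ), Lp.coeFn_add z (τ • h), Lp.coeFn_smul τ h,
      Lp.coeFn_zero ℝ 2 μ, hz'ae, hh'ae] with x e1 e2 e3 e4 e5 e6 e7 ez eh
    simp only [Pi.smul_apply, Pi.sub_apply, Pi.sup_apply, Pi.add_apply, Pi.zero_apply,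
      smul_eq_mul] at e1 e2 e3 e4 e5 e6 e7
    rw [e1, e2, e3, e4, e5, e6, e7, hφdef]
    rw [ez, eh]
  -- pointwise convergence of the difference quotient to d
  have hφlim : ∀ x, Tendsto (fun τ => φ τ x) (nhdsWithin 0 (Ioi 0)) (nhds (d x)) := by
    intro x
    rcases lt_trichotomy (z' x) 0 with hz | hz | hz
    · have hd0 : d x = 0 := by simp [hddef, hz.not_gt, hz.ne]
      rw [hd0]
      apply tendsto_const_nhds.congr'
      have hmem : Ioo (0:ℝ) (-(z' x) / (|h' x| + 1)) ∈ nhdsWithin (0:ℝ) (Ioi 0) := by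
        apply Ioo_mem_nhdsGT_of_mem
        exact ⟨le_rfl, div_pos (by linarith) (by positivity)⟩
      filter_upwards [hmem] with τ hτ
      have hτ0 : 0 < τ := hτ.1
      have hn : z' x + τ * h' x < 0 := by
        have h2 : τ * (|h' x| + 1) < -(z' x) := by
          rw [← lt_div_iff₀ (by positivity)]
          exact hτ.2
        have h3 : τ * h' x ≤ τ * |h' x| :=
          mul_le_mul_of_nonneg_left (le_abs_self _) hτ0.le
        nlinarith
      rw [hφdef]
      simp [max_eq_right hn.le, max_eq_right hz.le]
    · have hd0 : d x = max (h' x) 0 := by simp [hddef, hz]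
      rw [hd0]
      apply tendsto_const_nhds.congr'
      filter_upwards [self_mem_nhdsWithin] with τ (hτ : τ ∈ Ioi 0)
      have hτ0 : (0:ℝ) < τ := hτ
      rw [hφdef]
      simp only [hz, zero_add, max_self, sub_zero]
      rw [show max (τ * h' x) 0 = τ * max (h' x) 0 by
        rw [mul_max_of_nonneg _ _ hτ0.le, mul_zero]]
      field_simp
    · have hd0 : d x = h' x := by simp [hddef, hz]
      rw [hd0]
      apply tendsto_const_nhds.congr'
      have hmem : Ioo (0:ℝ) (z' x / (|h' x| + 1)) ∈ nhdsWithin (0:ℝ) (Ioi 0) := by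
        apply Ioo_mem_nhdsGT_of_mem
        exact ⟨le_rfl, by positivity⟩
      filter_upwards [hmem] with τ hτ
      have hτ0 : 0 < τ := hτ.1
      have hp : 0 < z' x + τ * h' x := by
        have h2 : τ * (|h' x| + 1) < z' x := by
          rw [← lt_div_iff₀ (by positivity)]
          exact hτ.2
        have h3 : -(τ * h' x) ≤ τ * |h' x| := by
          rw [← mul_neg]
          exact mul_le_mul_of_nonneg_left (neg_le_abs _) hτ0.le
        nlinarith
      rw [hφdef]
      simp only [max_eq_left hp.le, max_eq_left hz.le]
      field_simp
      ring
  -- dominated convergence for the squared norms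
  have hGmeas : ∀ τ : ℝ, Measurable fun x => (‖φ τ x - d x‖₊ : ℝ≥0∞) ^ (2:ℝ) := by
    intro τ
    have hφm : Measurable (φ τ) := by
      apply Measurable.mul measurable_const
      exact ((hz'meas.add (hh'meas.const_mul τ)).max measurable_const).sub
        (hz'meas.max measurable_const)
    exact ENNReal.continuous_rpow_const.measurable.comp
      (measurable_coe_nnreal_ennreal.comp (hφm.sub hdmeas).nnnorm)
  have hbound_int : (∫⁻ x, 4 * (‖h' x‖₊ : ℝ≥0∞) ^ (2:ℝ) ∂μ) ≠ ⊤ := by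
    have hm : Measurable fun x => (‖h' x‖₊ : ℝ≥0∞) ^ (2:ℝ) :=
      ENNReal.continuous_rpow_const.measurable.comp
        (measurable_coe_nnreal_ennreal.comp hh'meas.nnnorm)
    rw [lintegral_const_mul 4 hm]
    have hfin : (∫⁻ x, (‖h' x‖₊ : ℝ≥0∞) ^ (2:ℝ≥0∞).toReal ∂μ) < ⊤ :=
      lintegral_rpow_enorm_lt_top_of_eLpNorm_lt_top (by norm_num) (by norm_num)
        hh'mem.eLpNorm_lt_top
    simp only [ENNReal.toReal_ofNat] at hfin
    exact ENNReal.mul_ne_top (by norm_num) hfin.ne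
  have hbound : ∀ᶠ τ in nhdsWithin (0:ℝ) (Ioi 0),
      ∀ᵐ x ∂μ, (‖φ τ x - d x‖₊ : ℝ≥0∞) ^ (2:ℝ) ≤ 4 * (‖h' x‖₊ : ℝ≥0∞) ^ (2:ℝ) := by
    filter_upwards [self_mem_nhdsWithin] with τ (hτ : τ ∈ Ioi 0)
    refine ae_of_all _ fun x => ?_
    have hτ0 : (0:ℝ) < τ := hτ
    have habs : |φ τ x - d x| ≤ 2 * |h' x| := by
      calc |φ τ x - d x| ≤ |φ τ x| + |d x| := abs_sub _ _
        _ ≤ |h' x| + |h' x| := add_le_add (hφabs τ hτ0 x) (hdabs x)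
        _ = 2 * |h' x| := by ring
    have hnn : ‖φ τ x - d x‖₊ ≤ 2 * ‖h' x‖₊ := by
      rw [← NNReal.coe_le_coe]
      push_cast
      simpa [Real.norm_eq_abs] using habs
    calc (‖φ τ x - d x‖₊ : ℝ≥0∞) ^ (2:ℝ)
        ≤ ((2 * ‖h' x‖₊ : ℝ≥0) : ℝ≥0∞) ^ (2:ℝ) :=
          ENNReal.rpow_le_rpow (by exact_mod_cast hnn) (by norm_num)
      _ = 4 * (‖h' x‖₊ : ℝ≥0∞) ^ (2:ℝ) := by
          push_cast
          rw [ENNReal.mul_rpow_of_nonneg _ _ (by norm_num : (0:ℝ) ≤ 2)]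
          congr 1
          rw [show (2:ℝ) = ((2:ℕ):ℝ) by norm_num, ENNReal.rpow_natCast]
          norm_num
  have hlim : ∀ᵐ x ∂μ, Tendsto (fun τ => (‖φ τ x - d x‖₊ : ℝ≥0∞) ^ (2:ℝ))
      (nhdsWithin 0 (Ioi 0)) (nhds ((fun _ => (0:ℝ≥0∞)) x)) := by
    refine ae_of_all _ fun x => ?_
    have hc : Continuous fun r : ℝ => (‖r - d x‖₊ : ℝ≥0∞) ^ (2:ℝ) :=
      ENNReal.continuous_rpow_const.comp
        (ENNReal.continuous_coe.comp ((continuous_id.sub continuous_const).nnnorm))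
    have := (hc.tendsto (d x)).comp (hφlim x)
    simpa [ENNReal.zero_rpow_of_pos, Function.comp_def] using this
  have hDCT : Tendsto (fun τ => ∫⁻ x, (‖φ τ x - d x‖₊ : ℝ≥0∞) ^ (2:ℝ) ∂μ)
      (nhdsWithin (0:ℝ) (Ioi 0)) (nhds 0) := by
    have := tendsto_lintegral_filter_of_dominated_convergence
      (fun x => 4 * (‖h' x‖₊ : ℝ≥0∞) ^ (2:ℝ))
      (Eventually.of_forall hGmeas) hbound hbound_int hlim
    simpa using this
  -- convert to eLpNorm convergence
  have heLp : Tendsto (fun τ => eLpNorm (fun x => φ τ x - d x) 2 μ)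
      (nhdsWithin (0:ℝ) (Ioi 0)) (nhds 0) := by
    have hc : Tendsto (fun s : ℝ≥0∞ => s ^ (1/2 : ℝ)) (nhds 0) (nhds 0) := by
      have := ENNReal.continuous_rpow_const (y := (1/2:ℝ)) |>.tendsto 0
      simpa [ENNReal.zero_rpow_of_pos] using this
    have := hc.comp hDCT
    apply Tendsto.congr _ this
    intro τ
    rw [eLpNorm_eq_lintegral_rpow_enorm_toReal (by norm_num) (by norm_num)]
    simp [ENNReal.toReal_ofNat, enorm_eq_nnnorm]
  -- conclude convergence in Lp
  rw [tendsto_iff_norm_sub_tendsto_zero]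
  have hnorm : ∀ τ : ℝ,
      ‖(τ⁻¹ • (((z + τ • h) ⊔ 0) - (z ⊔ 0)) : Lp ℝ 2 μ) - hd_mem.toLp d‖
        = (eLpNorm (fun x => φ τ x - d x) 2 μ).toReal := by
    intro τ
    rw [Lp.norm_def]
    congr 1
    apply eLpNorm_congr_ae
    filter_upwards [Lp.coeFn_sub (τ⁻¹ • (((z + τ • h) ⊔ 0) - (z ⊔ 0))) (hd_mem.toLp d),
      hrep τ, hd_mem.coeFn_toLp] with x e1 e2 e3
    rw [e1]
    simp only [Pi.sub_apply]
    rw [e2, e3]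
  have := (ENNReal.tendsto_toReal (by norm_num : (0:ℝ≥0∞) ≠ ⊤)).comp heLp
  simp only [ENNReal.toReal_zero] at this
  exact Tendsto.congr (fun τ => (hnorm τ).symm) this
end

section
/- Consider the abstract state equation: then for every ℓ : (0,T) → F strongly measurable with ∫₀ᵀ ‖ℓ(s)‖²_F ds < ∞, there exists a unique continuous function q : [0,T] → E satisfying q(0) = 0 and q(t) = (1/ϵ) ∫₀ᵗ (B(q(s), ℓ(s)) − f(𝓗(q)(s)))⁺ ds for all t ∈ [0,T]. -/
open MeasureTheory Filter Set

private lemma posPart_norm_le_aux {α : Type*} [MeasurableSpace α] {μ : Measure α}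
    (a b : Lp ℝ 2 μ) : ‖a ⊔ 0 - b ⊔ 0‖ ≤ ‖a - b‖ :=
  HasSolidNorm.solid (abs_sup_sub_sup_le_abs a b 0)

private lemma fE_lipschitz_aux {α : Type*} [MeasurableSpace α] {μ : Measure α}
    (f : ℝ → ℝ) (Lf : ℝ) (hLf : 0 ≤ Lf)
    (hf : ∀ x y : ℝ, |f x - f y| ≤ Lf * |x - y|)
    (fE : Lp ℝ 2 μ → Lp ℝ 2 μ)
    (hfE : ∀ v : Lp ℝ 2 μ, (fE v : α → ℝ) =ᵐ[μ] fun x => f ((v : α → ℝ) x))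
    (u v : Lp ℝ 2 μ) : ‖fE u - fE v‖ ≤ Lf * ‖u - v‖ := by
  have h : |fE u - fE v| ≤ |Lf • (u - v)| := by
    rw [← MeasureTheory.Lp.coeFn_le]
    filter_upwards [MeasureTheory.Lp.coeFn_abs (fE u - fE v),
      MeasureTheory.Lp.coeFn_abs (Lf • (u - v)),
      MeasureTheory.Lp.coeFn_sub (fE u) (fE v),
      MeasureTheory.Lp.coeFn_smul Lf (u - v),
      MeasureTheory.Lp.coeFn_sub u v,
      hfE u, hfE v] with x h1 h2 h3 h4 h5 h6 h7
    rw [h1, h2, h3, h4]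
    simp only [Pi.sub_apply, Pi.smul_apply, smul_eq_mul]
    rw [h5, h6, h7]
    simp only [Pi.sub_apply]
    calc |f ((u : α → ℝ) x) - f ((v : α → ℝ) x)|
        ≤ Lf * |(u : α → ℝ) x - (v : α → ℝ) x| := hf _ _
      _ = |Lf * ((u : α → ℝ) x - (v : α → ℝ) x)| := by
          rw [abs_mul, abs_of_nonneg hLf]
  have h2 : ‖fE u - fE v‖ ≤ ‖Lf • (u - v)‖ := HasSolidNorm.solid h
  rwa [norm_smul, Real.norm_eq_abs, abs_of_nonneg hLf] at h2

set_option maxHeartbeats 2000000 in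
/-- **Existence and uniqueness for the abstract fatigue state equation.**
Setting: `E = L²(μ)` (`μ` finite), `F` a real Hilbert space, `ϵ > 0`, `T > 0`,
`B : E × F → E` bounded linear, `f : ℝ → ℝ` Lipschitz with constant `Lf` with Nemytskii
operator `fE` on `E`, and `H` a history operator mapping continuous trajectories to
continuous trajectories with the Volterra–Lipschitz property with constant `LH`.
For every strongly measurable `ℓ : (0,T) → F` with `∫₀ᵀ ‖ℓ‖² < ∞` there is a unique
continuous `q : [0,T] → E` with `q 0 = 0` and
`q t = (1/ϵ) ∫₀ᵗ (B(q s, ℓ s) − fE(H q s))⁺ ds` for all `t ∈ [0,T]`. -/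
theorem state_equation_exists_unique
    {α : Type*} [MeasurableSpace α] (μ : Measure α) [IsFiniteMeasure μ]
    {F : Type*} [NormedAddCommGroup F] [InnerProductSpace ℝ F] [CompleteSpace F]
    (ϵ T : ℝ) (hϵ : 0 < ϵ) (hT : 0 < T)
    (B : Lp ℝ 2 μ × F →L[ℝ] Lp ℝ 2 μ)
    (f : ℝ → ℝ) (Lf : ℝ) (hLf : 0 ≤ Lf)
    (hf : ∀ x y : ℝ, |f x - f y| ≤ Lf * |x - y|)
    (fE : Lp ℝ 2 μ → Lp ℝ 2 μ)
    (hfE : ∀ v : Lp ℝ 2 μ, (fE v : α → ℝ) =ᵐ[μ] fun x => f ((v : α → ℝ) x))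
    (H : (ℝ → Lp ℝ 2 μ) → (ℝ → Lp ℝ 2 μ)) (LH : ℝ) (hLH : 0 ≤ LH)
    (Hcont : ∀ q : ℝ → Lp ℝ 2 μ, ContinuousOn q (Icc 0 T) → ContinuousOn (H q) (Icc 0 T))
    (Hlip : ∀ q₁ q₂ : ℝ → Lp ℝ 2 μ, ContinuousOn q₁ (Icc 0 T) → ContinuousOn q₂ (Icc 0 T) →
      ∀ t ∈ Icc (0:ℝ) T,
        ‖H q₁ t - H q₂ t‖ ≤ LH * ∫ s in Ioc (0:ℝ) t, ‖q₁ s - q₂ s‖)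
    (ℓ : ℝ → F) (hℓ : MemLp ℓ 2 (volume.restrict (Ioc (0:ℝ) T))) :
    ∃ q : ℝ → Lp ℝ 2 μ,
      (ContinuousOn q (Icc 0 T) ∧ q 0 = 0 ∧
        ∀ t ∈ Icc (0:ℝ) T,
          q t = ϵ⁻¹ • ∫ s in Ioc (0:ℝ) t, ((B (q s, ℓ s) - fE (H q s)) ⊔ 0)) ∧
      ∀ q' : ℝ → Lp ℝ 2 μ,
        (ContinuousOn q' (Icc 0 T) ∧ q' 0 = 0 ∧
          ∀ t ∈ Icc (0:ℝ) T,
            q' t = ϵ⁻¹ • ∫ s in Ioc (0:ℝ) t, ((B (q' s, ℓ s) - fE (H q' s)) ⊔ 0)) →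
        ∀ t ∈ Icc (0:ℝ) T, q' t = q t := by
  classical
  have hϵinv : (0:ℝ) < ϵ⁻¹ := inv_pos.mpr hϵ
  have hfElip : ∀ u v : Lp ℝ 2 μ, ‖fE u - fE v‖ ≤ Lf * ‖u - v‖ :=
    fE_lipschitz_aux f Lf hLf hf fE hfE
  have hfEcont : Continuous fE := by
    have : LipschitzWith (Real.toNNReal Lf) fE := by
      apply LipschitzWith.of_dist_le_mul
      intro u v
      rw [dist_eq_norm, dist_eq_norm]
      simpa [Real.coe_toNNReal _ hLf] using hfElip u v
    exact this.continuous
  haveI hfin : IsFiniteMeasure (volume.restrict (Ioc (0:ℝ) T)) :=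
    ⟨by rw [Measure.restrict_apply_univ]; exact measure_Ioc_lt_top⟩
  -- extension operator
  set I : Set ℝ := Icc 0 T with hIdef
  let ex : C(I, Lp ℝ 2 μ) → ℝ → Lp ℝ 2 μ := fun u t => u (projIcc 0 T hT.le t)
  have ex_cont : ∀ u, Continuous (ex u) := fun u => u.continuous.comp continuous_projIcc
  have ex_eq : ∀ (u : C(I, Lp ℝ 2 μ)) (t : ℝ) (ht : t ∈ I), ex u t = u ⟨t, ht⟩ := by
    intro u t ht; simp only [ex, projIcc_of_mem hT.le ht]
  have ex_dist : ∀ (u v : C(I, Lp ℝ 2 μ)) (t : ℝ), ‖ex u t - ex v t‖ ≤ dist u v := by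
    intro u v t
    rw [← dist_eq_norm]
    exact ContinuousMap.dist_apply_le_dist _
  -- the nonlinearity
  let G : (ℝ → Lp ℝ 2 μ) → ℝ → Lp ℝ 2 μ := fun q s => (B (q s, ℓ s) - fE (H q s)) ⊔ 0
  have hnormG : ∀ a : Lp ℝ 2 μ, ‖a ⊔ 0‖ ≤ ‖a‖ := by
    intro a
    have := posPart_norm_le_aux a 0
    simpa using this
  -- Lipschitz-type estimate for G
  have hGlipS : ∀ (p q : ℝ → Lp ℝ 2 μ), ContinuousOn p I → ContinuousOn q I → ∀ s ∈ I,
      ‖G p s - G q s‖ ≤ ‖B‖ * ‖p s - q s‖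
        + Lf * (LH * ∫ r in Ioc (0:ℝ) s, ‖p r - q r‖) := by
    intro p q hp hq s hs
    have h1 : ‖G p s - G q s‖
        ≤ ‖(B (p s, ℓ s) - fE (H p s)) - (B (q s, ℓ s) - fE (H q s))‖ :=
      posPart_norm_le_aux _ _
    have h2 : (B (p s, ℓ s) - fE (H p s)) - (B (q s, ℓ s) - fE (H q s))
        = (B (p s, ℓ s) - B (q s, ℓ s)) - (fE (H p s) - fE (H q s)) := by abel
    have h3 : ‖B (p s, ℓ s) - B (q s, ℓ s)‖ ≤ ‖B‖ * ‖p s - q s‖ := by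
      have he : B (p s, ℓ s) - B (q s, ℓ s) = B (p s - q s, 0) := by
        rw [← map_sub]
        congr 1
        simp [Prod.mk_sub_mk]
      rw [he]
      calc ‖B (p s - q s, 0)‖ ≤ ‖B‖ * ‖(p s - q s, (0:F))‖ := B.le_opNorm _
        _ = ‖B‖ * ‖p s - q s‖ := by
            rw [Prod.norm_def]
            simp [max_eq_left (norm_nonneg _)]
    have h4 : ‖fE (H p s) - fE (H q s)‖
        ≤ Lf * (LH * ∫ r in Ioc (0:ℝ) s, ‖p r - q r‖) :=
      le_trans (hfElip _ _) (mul_le_mul_of_nonneg_left (Hlip p q hp hq s hs) hLf)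
    calc ‖G p s - G q s‖
        ≤ ‖(B (p s, ℓ s) - fE (H p s)) - (B (q s, ℓ s) - fE (H q s))‖ := h1
      _ ≤ ‖B (p s, ℓ s) - B (q s, ℓ s)‖ + ‖fE (H p s) - fE (H q s)‖ := by
          rw [h2]; exact norm_sub_le _ _
      _ ≤ _ := add_le_add h3 h4
  -- integrability of G
  have hGint : ∀ q : ℝ → Lp ℝ 2 μ, ContinuousOn q I →
      IntegrableOn (G q) (Ioc 0 T) := by
    intro q hq
    have hqm : AEStronglyMeasurable q (volume.restrict (Ioc 0 T)) :=
      (hq.mono Ioc_subset_Icc_self).aestronglyMeasurable measurableSet_Ioc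
    have hpair : AEStronglyMeasurable (fun s => (q s, ℓ s)) (volume.restrict (Ioc 0 T)) :=
      hqm.prodMk hℓ.aestronglyMeasurable
    have hHq : ContinuousOn (fun s => fE (H q s)) I :=
      hfEcont.comp_continuousOn (Hcont q hq)
    have hHqm : AEStronglyMeasurable (fun s => fE (H q s)) (volume.restrict (Ioc 0 T)) :=
      (hHq.mono Ioc_subset_Icc_self).aestronglyMeasurable measurableSet_Ioc
    have hsub : AEStronglyMeasurable (fun s => B (q s, ℓ s) - fE (H q s))
        (volume.restrict (Ioc 0 T)) :=
      (B.continuous.comp_aestronglyMeasurable hpair).sub hHqm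
    have hmeas : AEStronglyMeasurable (G q) (volume.restrict (Ioc 0 T)) := by
      have hcontsup : Continuous (fun a : Lp ℝ 2 μ => a ⊔ 0) :=
        continuous_id.sup continuous_const
      exact hcontsup.comp_aestronglyMeasurable hsub
    obtain ⟨C₁, hC₁⟩ := isCompact_Icc.exists_bound_of_continuousOn hq
    obtain ⟨C₂, hC₂⟩ := isCompact_Icc.exists_bound_of_continuousOn hHq
    have hℓi : Integrable ℓ (volume.restrict (Ioc 0 T)) := hℓ.integrable (by norm_num)
    have hbound : Integrable (fun s => ‖B‖ * (C₁ + ‖ℓ s‖) + C₂)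
        (volume.restrict (Ioc 0 T)) :=
      ((((integrable_const C₁).add hℓi.norm).const_mul ‖B‖)).add (integrable_const _)
    apply hbound.mono' hmeas
    refine (ae_restrict_iff' measurableSet_Ioc).2 (Eventually.of_forall fun s hs => ?_)
    have hsI : s ∈ I := ⟨hs.1.le, hs.2⟩
    have h1 : ‖B (q s, ℓ s)‖ ≤ ‖B‖ * ‖(q s, ℓ s)‖ := B.le_opNorm _
    have h2 : ‖(q s, ℓ s)‖ ≤ C₁ + ‖ℓ s‖ := by
      rw [Prod.norm_def]
      exact max_le ((hC₁ s hsI).trans (le_add_of_nonneg_right (norm_nonneg _)))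
        (le_add_of_nonneg_left ((norm_nonneg _).trans (hC₁ 0 ⟨le_refl 0, hT.le⟩)))
    calc ‖G q s‖ ≤ ‖B (q s, ℓ s) - fE (H q s)‖ := hnormG _
      _ ≤ ‖B (q s, ℓ s)‖ + ‖fE (H q s)‖ := norm_sub_le _ _
      _ ≤ ‖B‖ * (C₁ + ‖ℓ s‖) + C₂ :=
          add_le_add (h1.trans (mul_le_mul_of_nonneg_left h2 B.opNorm_nonneg))
            (hC₂ s hsI)
  have hGintIcc : ∀ u : C(I, Lp ℝ 2 μ), IntegrableOn (G (ex u)) (Icc 0 T) := by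
    intro u
    rw [integrableOn_Icc_iff_integrableOn_Ioc]
    exact hGint (ex u) (ex_cont u).continuousOn
  -- the Picard map
  let Φ : C(I, Lp ℝ 2 μ) → C(I, Lp ℝ 2 μ) := fun u =>
    ⟨I.restrict (fun t => ϵ⁻¹ • ∫ s in Ioc (0:ℝ) t, G (ex u) s), by
      apply ContinuousOn.restrict
      exact (intervalIntegral.continuousOn_primitive (hGintIcc u)).const_smul ϵ⁻¹⟩
  have hΦeq : ∀ (u : C(I, Lp ℝ 2 μ)) (t : ℝ) (ht : t ∈ I),
      ex (Φ u) t = ϵ⁻¹ • ∫ s in Ioc (0:ℝ) t, G (ex u) s := by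
    intro u t ht
    rw [ex_eq (Φ u) t ht]
    rfl
  -- constants
  set K : ℝ := ϵ⁻¹ * (‖B‖ + Lf * (LH * T)) with hKdef
  have hC0 : (0:ℝ) ≤ ‖B‖ + Lf * (LH * T) :=
    add_nonneg B.opNorm_nonneg (mul_nonneg hLf (mul_nonneg hLH hT.le))
  have hK0 : 0 ≤ K := mul_nonneg hϵinv.le hC0
  -- auxiliary integral computation
  have hpow_int : ∀ (c : ℝ) (m : ℕ) (x : ℝ), 0 ≤ x →
      (∫ r in Ioc (0:ℝ) x, c * r ^ m) = c * (x ^ (m+1) / (m+1)) := by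
    intro c m x hx
    rw [← intervalIntegral.integral_of_le hx, intervalIntegral.integral_const_mul,
      integral_pow]
    norm_num
  -- the key iterate estimate
  have key : ∀ n : ℕ, ∀ u v : C(I, Lp ℝ 2 μ), ∀ t ∈ I,
      ‖ex (Φ^[n] u) t - ex (Φ^[n] v) t‖ ≤ dist u v * (K ^ n * t ^ n / n.factorial) := by
    intro n
    induction n with
    | zero => intro u v t ht; simpa using ex_dist u v t
    | succ n ih =>
      intro u v t ht
      set a := Φ^[n] u with ha
      set b := Φ^[n] v with hb
      set D : ℝ := dist u v with hD
      have hD0 : 0 ≤ D := dist_nonneg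
      have hae : Continuous (ex a) := ex_cont a
      have hbe : Continuous (ex b) := ex_cont b
      have hIa : IntegrableOn (G (ex a)) (Ioc 0 t) :=
        (hGint _ hae.continuousOn).mono_set (Ioc_subset_Ioc_right ht.2)
      have hIb : IntegrableOn (G (ex b)) (Ioc 0 t) :=
        (hGint _ hbe.continuousOn).mono_set (Ioc_subset_Ioc_right ht.2)
      have hfac0 : (0:ℝ) < n.factorial := by exact_mod_cast n.factorial_pos
      -- pointwise estimate on the integrand
      have hpt : ∀ s ∈ Ioc (0:ℝ) t, ‖G (ex a) s - G (ex b) s‖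
          ≤ (‖B‖ + Lf * (LH * T)) * (D * (K ^ n / n.factorial) * s ^ n) := by
        intro s hs
        have hsI : s ∈ I := ⟨hs.1.le, hs.2.trans ht.2⟩
        have h1 := hGlipS (ex a) (ex b) hae.continuousOn hbe.continuousOn s hsI
        have ihs : ‖ex a s - ex b s‖ ≤ D * (K ^ n / n.factorial) * s ^ n := by
          have := ih u v s hsI
          calc ‖ex a s - ex b s‖ ≤ D * (K ^ n * s ^ n / n.factorial) := this
            _ = D * (K ^ n / n.factorial) * s ^ n := by ring
        have hinner : (∫ r in Ioc (0:ℝ) s, ‖ex a r - ex b r‖)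
            ≤ D * (K ^ n / n.factorial) * (s ^ (n+1) / (n+1)) := by
          have hle : ∀ r ∈ Ioc (0:ℝ) s, ‖ex a r - ex b r‖
              ≤ D * (K ^ n / n.factorial) * r ^ n := by
            intro r hr
            have hrI : r ∈ I := ⟨hr.1.le, hr.2.trans hsI.2⟩
            have := ih u v r hrI
            calc ‖ex a r - ex b r‖ ≤ D * (K ^ n * r ^ n / n.factorial) := this
              _ = D * (K ^ n / n.factorial) * r ^ n := by ring
          have hint1 : IntegrableOn (fun r => ‖ex a r - ex b r‖) (Ioc 0 s) :=
            ((hae.sub hbe).norm).integrableOn_Ioc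
          have hint2 : IntegrableOn
              (fun r => D * (K ^ n / n.factorial) * r ^ n) (Ioc 0 s) :=
            (continuous_const.mul (continuous_pow n)).integrableOn_Ioc
          refine (setIntegral_mono_on hint1 hint2 measurableSet_Ioc hle).trans
            (le_of_eq ?_)
          exact hpow_int _ n s hs.1.le
        have hs1 : s ^ (n+1) / (n+1) ≤ T * s ^ n := by
          have hsn : (0:ℝ) ≤ s ^ n := pow_nonneg hs.1.le n
          have h1' : s ^ (n+1) ≤ T * s ^ n := by
            rw [pow_succ]
            calc s ^ n * s ≤ s ^ n * T :=
                  mul_le_mul_of_nonneg_left hsI.2 hsn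
              _ = T * s ^ n := mul_comm _ _
          have h2' : s ^ (n+1) / (n+1) ≤ s ^ (n+1) := by
            apply div_le_self (pow_nonneg hs.1.le _)
            have : (1:ℝ) ≤ (n:ℝ) + 1 := by
              have : (0:ℝ) ≤ (n:ℝ) := Nat.cast_nonneg n
              linarith
            exact_mod_cast this
          exact h2'.trans h1'
        have hcoef : (0:ℝ) ≤ D * (K ^ n / n.factorial) :=
          mul_nonneg hD0 (div_nonneg (pow_nonneg hK0 n) hfac0.le)
        calc ‖G (ex a) s - G (ex b) s‖
            ≤ ‖B‖ * ‖ex a s - ex b s‖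
              + Lf * (LH * ∫ r in Ioc (0:ℝ) s, ‖ex a r - ex b r‖) := h1
          _ ≤ ‖B‖ * (D * (K ^ n / n.factorial) * s ^ n)
              + Lf * (LH * (D * (K ^ n / n.factorial) * (s ^ (n+1) / (n+1)))) := by
              refine add_le_add (mul_le_mul_of_nonneg_left ihs B.opNorm_nonneg) ?_
              exact mul_le_mul_of_nonneg_left
                (mul_le_mul_of_nonneg_left hinner hLH) hLf
          _ ≤ ‖B‖ * (D * (K ^ n / n.factorial) * s ^ n)
              + Lf * (LH * (D * (K ^ n / n.factorial) * (T * s ^ n))) := by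
              refine add_le_add (le_refl _) ?_
              refine mul_le_mul_of_nonneg_left
                (mul_le_mul_of_nonneg_left
                  (mul_le_mul_of_nonneg_left hs1 hcoef) hLH) hLf
          _ = (‖B‖ + Lf * (LH * T)) * (D * (K ^ n / n.factorial) * s ^ n) := by ring
      -- integrate the pointwise estimate
      rw [Function.iterate_succ_apply', Function.iterate_succ_apply', ← ha, ← hb,
        hΦeq a t ht, hΦeq b t ht, ← smul_sub, norm_smul, Real.norm_eq_abs,
        abs_of_pos hϵinv, ← integral_sub hIa hIb]
      have hstep : ‖∫ s in Ioc (0:ℝ) t, (G (ex a) s - G (ex b) s)‖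
          ≤ ∫ s in Ioc (0:ℝ) t, ‖G (ex a) s - G (ex b) s‖ :=
        norm_integral_le_integral_norm _
      have hint1 : IntegrableOn (fun s => ‖G (ex a) s - G (ex b) s‖) (Ioc 0 t) :=
        (hIa.sub hIb).norm
      have hint2 : IntegrableOn (fun s =>
          ((‖B‖ + Lf * (LH * T)) * (D * (K ^ n / n.factorial))) * s ^ n) (Ioc 0 t) :=
        (continuous_const.mul (continuous_pow n)).integrableOn_Ioc
      have hmono : (∫ s in Ioc (0:ℝ) t, ‖G (ex a) s - G (ex b) s‖)
          ≤ ((‖B‖ + Lf * (LH * T)) * (D * (K ^ n / n.factorial))) * (t ^ (n+1) / (n+1)) := by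
        refine le_trans (setIntegral_mono_on hint1 hint2 measurableSet_Ioc ?_)
          (le_of_eq (hpow_int _ n t ht.1))
        intro s hs
        have := hpt s hs
        calc ‖G (ex a) s - G (ex b) s‖
            ≤ (‖B‖ + Lf * (LH * T)) * (D * (K ^ n / n.factorial) * s ^ n) := this
          _ = ((‖B‖ + Lf * (LH * T)) * (D * (K ^ n / n.factorial))) * s ^ n := by ring
      calc ϵ⁻¹ * ‖∫ s in Ioc (0:ℝ) t, (G (ex a) s - G (ex b) s)‖
          ≤ ϵ⁻¹ * (((‖B‖ + Lf * (LH * T)) * (D * (K ^ n / n.factorial)))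
            * (t ^ (n+1) / (n+1))) :=
            mul_le_mul_of_nonneg_left (hstep.trans hmono) hϵinv.le
        _ = D * (K ^ (n+1) * t ^ (n+1) / (n+1).factorial) := by
            rw [hKdef, Nat.factorial_succ]
            push_cast
            have hn1 : ((n:ℝ) + 1) ≠ 0 := by positivity
            have hϵ0 : ϵ ≠ 0 := hϵ.ne'
            field_simp
            ring_nf
            simp only [mul_inv_cancel_right₀ hϵ0]
  -- distance estimate for iterates
  have hdist : ∀ n : ℕ, ∀ u v : C(I, Lp ℝ 2 μ),
      dist (Φ^[n] u) (Φ^[n] v) ≤ ((K * T) ^ n / n.factorial) * dist u v := by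
    intro n u v
    have hC0' : 0 ≤ ((K * T) ^ n / n.factorial) * dist u v := by positivity
    rw [ContinuousMap.dist_le hC0']
    intro x
    have hx : (x : ℝ) ∈ I := x.2
    have hk := key n u v x hx
    rw [ex_eq _ _ hx, ex_eq _ _ hx] at hk
    simp only [Subtype.coe_eta] at hk
    rw [dist_eq_norm]
    refine hk.trans ?_
    rw [mul_comm]
    have h1 : K ^ n * (x:ℝ) ^ n ≤ (K * T) ^ n := by
      rw [mul_pow K T]
      exact mul_le_mul_of_nonneg_left
        (pow_le_pow_left₀ hx.1 hx.2 n) (pow_nonneg hK0 n)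
    have hfacpos : (0:ℝ) < n.factorial := by exact_mod_cast n.factorial_pos
    exact mul_le_mul_of_nonneg_right ((div_le_div_iff_of_pos_right hfacpos).mpr h1) dist_nonneg
  -- choose n making the iterate a contraction
  obtain ⟨n, hn⟩ : ∃ n : ℕ, (K * T) ^ n / n.factorial < 1 :=
    ((FloorSemiring.tendsto_pow_div_factorial_atTop (K * T)).eventually_lt_const
      one_pos).exists
  have hn0 : 0 ≤ (K * T) ^ n / n.factorial := by positivity
  set κ : NNReal := ⟨(K * T) ^ n / n.factorial, hn0⟩ with hκdef
  haveI : Nonempty C(I, Lp ℝ 2 μ) := ⟨ContinuousMap.const _ 0⟩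
  have hcontr : ContractingWith κ (Φ^[n]) := by
    constructor
    · rw [← NNReal.coe_lt_one]
      exact hn
    · apply LipschitzWith.of_dist_le_mul
      intro x y
      exact hdist n x y
  set q₀ := ContractingWith.fixedPoint (Φ^[n]) hcontr with hq₀def
  have hfix : Function.IsFixedPt Φ q₀ := hcontr.isFixedPt_fixedPoint_iterate
  -- the solution
  have heqn : ∀ t ∈ I, ex q₀ t
      = ϵ⁻¹ • ∫ s in Ioc (0:ℝ) t, ((B (ex q₀ s, ℓ s) - fE (H (ex q₀) s)) ⊔ 0) := by
    intro t ht
    conv_lhs => rw [← hfix]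
    exact hΦeq q₀ t ht
  have h0 : ex q₀ 0 = 0 := by
    have := heqn 0 ⟨le_refl 0, hT.le⟩
    simpa [Ioc_self] using this
  refine ⟨ex q₀, ⟨(ex_cont q₀).continuousOn, h0, heqn⟩, ?_⟩
  -- uniqueness
  rintro q' ⟨hq'c, hq'0, hq'eq⟩ t ht
  let u' : C(I, Lp ℝ 2 μ) := ⟨I.restrict q', hq'c.restrict⟩
  have hexu' : ∀ s ∈ I, ex u' s = q' s := by
    intro s hs
    rw [ex_eq u' s hs]
    rfl
  have hHagree : ∀ s ∈ I, H (ex u') s = H q' s := by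
    intro s hs
    have h := Hlip (ex u') q' (ex_cont u').continuousOn hq'c s hs
    have hz : (∫ r in Ioc (0:ℝ) s, ‖ex u' r - q' r‖) = 0 := by
      rw [setIntegral_congr_fun measurableSet_Ioc (g := fun _ => (0:ℝ))
        (fun r hr => by
          have : ex u' r = q' r := hexu' r ⟨hr.1.le, hr.2.trans hs.2⟩
          simp [this])]
      simp
    rw [hz, mul_zero] at h
    have h' : ‖H (ex u') s - H q' s‖ = 0 := le_antisymm h (norm_nonneg _)
    rwa [norm_eq_zero, sub_eq_zero] at h'
  have hfix' : Function.IsFixedPt Φ u' := by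
    apply ContinuousMap.ext
    intro x
    have hx : (x : ℝ) ∈ I := x.2
    have h1 : (Φ u') x = ϵ⁻¹ • ∫ s in Ioc (0:ℝ) (x:ℝ), G (ex u') s := rfl
    have h2 : u' x = q' x := rfl
    rw [h1, h2, hq'eq x hx]
    congr 1
    apply setIntegral_congr_fun measurableSet_Ioc
    intro s hs
    have hsI : s ∈ I := ⟨hs.1.le, hs.2.trans hx.2⟩
    show (B (ex u' s, ℓ s) - fE (H (ex u') s)) ⊔ 0 = (B (q' s, ℓ s) - fE (H q' s)) ⊔ 0
    rw [hexu' s hsI, hHagree s hsI]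
  have huq : u' = q₀ := hcontr.fixedPoint_unique (hfix'.iterate n)
  calc q' t = ex u' t := (hexu' t ht).symm
    _ = ex q₀ t := by rw [huq]
end

section
/- In the setting of the abstract state equation, fix ℓ : (0,T) → F strongly measurable with ∫₀ᵀ ‖ℓ(s)‖²_F ds < ∞ and t ∈ (0,T], and define, for continuous η : [0,t] → E, 𝒢(η)(τ) := ∫₀^τ (B(η(s), ℓ(s)) − f(𝓗(η)(s)))⁺ ds for τ ∈ [0,t]. Let c denote the operator norm of the bounded linear map E ∋ v ↦ B(v, 0). Then for all continuous q₁, q₂ : [0,t] → E and all τ ∈ [0,t]: ‖𝒢(q₁)(τ) − 𝒢(q₂)(τ)‖_E ≤ (c·t^{1/2} + L_f·L_𝓗·t^{3/2}) · ( ∫₀ᵗ ‖q₁(s) − q₂(s)‖²_E ds )^{1/2}. -/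
open MeasureTheory Filter Set

section Aux

variable {α : Type*} [MeasurableSpace α] {μ : Measure α}

/-- The Nemytskii operator `fE` is Lipschitz with constant `Lf`. -/
lemma aux_fE_lip (f : ℝ → ℝ) (Lf : ℝ) (hLf : 0 ≤ Lf)
    (hf : ∀ x y : ℝ, |f x - f y| ≤ Lf * |x - y|)
    (fE : Lp ℝ 2 μ → Lp ℝ 2 μ)
    (hfE : ∀ v : Lp ℝ 2 μ, (fE v : α → ℝ) =ᵐ[μ] fun x => f ((v : α → ℝ) x))
    (u v : Lp ℝ 2 μ) : ‖fE u - fE v‖ ≤ Lf * ‖u - v‖ := by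
  have h1 : ‖fE u - fE v‖ ≤ ‖Lf • (u - v)‖ := by
    apply MeasureTheory.Lp.norm_le_norm_of_ae_le
    filter_upwards [hfE u, hfE v, Lp.coeFn_sub (fE u) (fE v),
      Lp.coeFn_smul Lf (u - v), Lp.coeFn_sub u v] with x h1 h2 h3 h4 h5
    rw [h3, h4, Pi.sub_apply, h1, h2, Pi.smul_apply, h5, Pi.sub_apply]
    simp only [smul_eq_mul, Real.norm_eq_abs, abs_mul, abs_of_nonneg hLf]
    exact hf _ _
  calc ‖fE u - fE v‖ ≤ ‖Lf • (u - v)‖ := h1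
    _ = Lf * ‖u - v‖ := by rw [norm_smul, Real.norm_eq_abs, abs_of_nonneg hLf]

end Aux

/-- **Contraction estimate for the fixed-point map `𝒢` of the abstract state equation.**
With `𝒢(η)(τ) = ∫₀^τ (B(η s, ℓ s) − fE(H η s))⁺ ds` and `c` the operator norm of
`v ↦ B(v,0)`, one has, for all continuous `q₁, q₂` and all `τ ∈ [0,t]`,
`‖𝒢(q₁)(τ) − 𝒢(q₂)(τ)‖ ≤ (c·√t + Lf·LH·t^{3/2}) · ‖q₁ − q₂‖_{L²(0,t;E)}`. -/
theorem fixed_point_map_contraction_estimate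
    {α : Type*} [MeasurableSpace α] (μ : Measure α) [IsFiniteMeasure μ]
    {F : Type*} [NormedAddCommGroup F] [InnerProductSpace ℝ F] [CompleteSpace F]
    (ϵ T : ℝ) (hϵ : 0 < ϵ) (hT : 0 < T)
    (B : Lp ℝ 2 μ × F →L[ℝ] Lp ℝ 2 μ)
    (f : ℝ → ℝ) (Lf : ℝ) (hLf : 0 ≤ Lf)
    (hf : ∀ x y : ℝ, |f x - f y| ≤ Lf * |x - y|)
    (fE : Lp ℝ 2 μ → Lp ℝ 2 μ)
    (hfE : ∀ v : Lp ℝ 2 μ, (fE v : α → ℝ) =ᵐ[μ] fun x => f ((v : α → ℝ) x))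
    (H : (ℝ → Lp ℝ 2 μ) → (ℝ → Lp ℝ 2 μ)) (LH : ℝ) (hLH : 0 ≤ LH)
    (Hcont : ∀ q : ℝ → Lp ℝ 2 μ, ContinuousOn q (Icc 0 T) → ContinuousOn (H q) (Icc 0 T))
    (Hlip : ∀ q₁ q₂ : ℝ → Lp ℝ 2 μ, ContinuousOn q₁ (Icc 0 T) → ContinuousOn q₂ (Icc 0 T) →
      ∀ t ∈ Icc (0:ℝ) T,
        ‖H q₁ t - H q₂ t‖ ≤ LH * ∫ s in Ioc (0:ℝ) t, ‖q₁ s - q₂ s‖)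
    (ℓ : ℝ → F) (hℓ : MemLp ℓ 2 (volume.restrict (Ioc (0:ℝ) T)))
    (t : ℝ) (ht : t ∈ Ioc (0:ℝ) T) :
    ∀ q₁ q₂ : ℝ → Lp ℝ 2 μ, ContinuousOn q₁ (Icc 0 T) → ContinuousOn q₂ (Icc 0 T) →
      ∀ τ ∈ Icc (0:ℝ) t,
        ‖(∫ s in Ioc (0:ℝ) τ, ((B (q₁ s, ℓ s) - fE (H q₁ s)) ⊔ 0)) -
            ∫ s in Ioc (0:ℝ) τ, ((B (q₂ s, ℓ s) - fE (H q₂ s)) ⊔ 0)‖ ≤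
          (‖B.comp (ContinuousLinearMap.inl ℝ (Lp ℝ 2 μ) F)‖ * Real.sqrt t +
              Lf * LH * (t * Real.sqrt t)) *
            Real.sqrt (∫ s in Ioc (0:ℝ) t, ‖q₁ s - q₂ s‖ ^ 2) := by
  intro q₁ q₂ hq₁ hq₂ τ hτ
  obtain ⟨ht0, htT⟩ := ht
  obtain ⟨hτ0, hτt⟩ := hτ
  have hτT : τ ≤ T := hτt.trans htT
  -- basic Lipschitz facts
  have hfE_lip : ∀ u v : Lp ℝ 2 μ, ‖fE u - fE v‖ ≤ Lf * ‖u - v‖ :=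
    aux_fE_lip f Lf hLf hf fE hfE
  have hfE_cont : Continuous fE := by
    refine (LipschitzWith.of_dist_le_mul (K := Lf.toNNReal) fun u v => ?_).continuous
    rw [dist_eq_norm, dist_eq_norm, Real.coe_toNNReal Lf hLf]
    exact hfE_lip u v
  have hpos : ∀ a b : Lp ℝ 2 μ, ‖a ⊔ 0 - b ⊔ 0‖ ≤ ‖a - b‖ := fun a b =>
    norm_sup_sub_sup_le_norm a b 0
  have hpos_cont : Continuous (fun v : Lp ℝ 2 μ => v ⊔ 0) := by
    refine (LipschitzWith.of_dist_le_mul (K := 1) fun u v => ?_).continuous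
    rw [dist_eq_norm, dist_eq_norm]
    simpa using hpos u v
  set A : Lp ℝ 2 μ →L[ℝ] Lp ℝ 2 μ := B.comp (ContinuousLinearMap.inl ℝ (Lp ℝ 2 μ) F) with hA
  set C : F →L[ℝ] Lp ℝ 2 μ := B.comp (ContinuousLinearMap.inr ℝ (Lp ℝ 2 μ) F) with hC
  have hB_split : ∀ (v : Lp ℝ 2 μ) (w : F), B (v, w) = A v + C w := by
    intro v w
    have h : ((v, w) : Lp ℝ 2 μ × F) = (v, 0) + (0, w) := by simp
    rw [h, map_add]; rfl
  set Δ : ℝ → ℝ := fun s => ‖q₁ s - q₂ s‖ with hΔ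
  have hΔ_cont : ContinuousOn Δ (Icc 0 T) := (hq₁.sub hq₂).norm
  have hΔ_nonneg : ∀ s, 0 ≤ Δ s := fun s => norm_nonneg _
  have hΔ_int_t : IntegrableOn Δ (Ioc 0 t) := by
    exact ((hΔ_cont.mono (Icc_subset_Icc_right htT)).integrableOn_Icc).mono_set
      Ioc_subset_Icc_self
  set I := ∫ s in Ioc (0:ℝ) t, Δ s with hI
  have hI_nonneg : 0 ≤ I :=
    setIntegral_nonneg measurableSet_Ioc fun s _ => hΔ_nonneg s
  have hsub_I : ∀ s, s ≤ t → (∫ u in Ioc (0:ℝ) s, Δ u) ≤ I := by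
    intro s hst
    exact setIntegral_mono_set hΔ_int_t (Eventually.of_forall fun u => hΔ_nonneg u)
      ((Ioc_subset_Ioc_right hst).eventuallyLE)
  -- integrability of the two integrands on `Ioc 0 τ`
  have hℓτ : IntegrableOn (fun s => C (ℓ s)) (Ioc (0:ℝ) τ) := by
    have h1 : MemLp (fun s => C (ℓ s)) 2 (volume.restrict (Ioc (0:ℝ) T)) :=
      C.comp_memLp' hℓ
    haveI : IsFiniteMeasure (volume.restrict (Ioc (0:ℝ) T)) :=
      ⟨by rw [Measure.restrict_apply_univ]; simp [Real.volume_Ioc]⟩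
    have h2 : Integrable (fun s => C (ℓ s)) (volume.restrict (Ioc (0:ℝ) T)) :=
      h1.integrable (by norm_num)
    exact h2.mono_measure (Measure.restrict_mono (Ioc_subset_Ioc_right hτT) le_rfl)
  have hφint : ∀ q : ℝ → Lp ℝ 2 μ, ContinuousOn q (Icc 0 T) →
      IntegrableOn (fun s => B (q s, ℓ s) - fE (H q s)) (Ioc (0:ℝ) τ) := by
    intro q hq
    have hψ : ContinuousOn (fun s => A (q s) - fE (H q s)) (Icc 0 T) :=
      (A.continuous.comp_continuousOn hq).sub (hfE_cont.comp_continuousOn (Hcont q hq))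
    have heq : (fun s => B (q s, ℓ s) - fE (H q s)) =
        fun s => (A (q s) - fE (H q s)) + C (ℓ s) := by
      funext s; rw [hB_split]; abel
    rw [heq]
    exact ((((hψ.mono (Icc_subset_Icc_right hτT)).integrableOn_Icc).mono_set
      Ioc_subset_Icc_self)).add hℓτ
  have hgint : ∀ q : ℝ → Lp ℝ 2 μ, ContinuousOn q (Icc 0 T) →
      IntegrableOn (fun s => (B (q s, ℓ s) - fE (H q s)) ⊔ 0) (Ioc (0:ℝ) τ) := by
    intro q hq
    have hφ := hφint q hq
    refine Integrable.mono' hφ.norm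
      (hpos_cont.comp_aestronglyMeasurable hφ.aestronglyMeasurable)
      (Eventually.of_forall fun s => ?_)
    simpa using hpos (B (q s, ℓ s) - fE (H q s)) 0
  have hg₁_int := hgint q₁ hq₁
  have hg₂_int := hgint q₂ hq₂
  have hφ₁_int := hφint q₁ hq₁
  have hφ₂_int := hφint q₂ hq₂
  -- pointwise bound
  have hpt : ∀ s ∈ Ioc (0:ℝ) τ,
      ‖((B (q₁ s, ℓ s) - fE (H q₁ s)) ⊔ 0) - ((B (q₂ s, ℓ s) - fE (H q₂ s)) ⊔ 0)‖ ≤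
        ‖A‖ * Δ s + Lf * LH * I := by
    intro s hs
    have hsT : s ∈ Icc (0:ℝ) T := ⟨hs.1.le, (hs.2.trans hτt).trans htT⟩
    calc ‖((B (q₁ s, ℓ s) - fE (H q₁ s)) ⊔ 0) - ((B (q₂ s, ℓ s) - fE (H q₂ s)) ⊔ 0)‖
        ≤ ‖(B (q₁ s, ℓ s) - fE (H q₁ s)) - (B (q₂ s, ℓ s) - fE (H q₂ s))‖ :=
          norm_sup_sub_sup_le_norm _ _ _
      _ = ‖A (q₁ s - q₂ s) - (fE (H q₁ s) - fE (H q₂ s))‖ := by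
          rw [hB_split, hB_split, map_sub A]; congr 1; abel
      _ ≤ ‖A (q₁ s - q₂ s)‖ + ‖fE (H q₁ s) - fE (H q₂ s)‖ := norm_sub_le _ _
      _ ≤ ‖A‖ * Δ s + Lf * (LH * ∫ u in Ioc (0:ℝ) s, Δ u) := by
          refine add_le_add (A.le_opNorm _) ?_
          exact (hfE_lip _ _).trans
            (mul_le_mul_of_nonneg_left (Hlip q₁ q₂ hq₁ hq₂ s hsT) hLf)
      _ ≤ ‖A‖ * Δ s + Lf * LH * I := by
          have h1 := hsub_I s (hs.2.trans hτt)
          have : Lf * (LH * ∫ u in Ioc (0:ℝ) s, Δ u) ≤ Lf * LH * I := by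
            rw [mul_assoc]
            exact mul_le_mul_of_nonneg_left
              (mul_le_mul_of_nonneg_left h1 hLH) hLf
          linarith
  -- Hölder / Cauchy–Schwarz step
  have hHolder : I ≤ Real.sqrt t * Real.sqrt (∫ s in Ioc (0:ℝ) t, Δ s ^ 2) := by
    haveI : IsFiniteMeasure (volume.restrict (Ioc (0:ℝ) t)) :=
      ⟨by rw [Measure.restrict_apply_univ]; simp [Real.volume_Ioc]⟩
    have h2 : (2:ℝ).HolderConjugate 2 := Real.HolderConjugate.two_two
    obtain ⟨M, hM⟩ :=
      (isCompact_Icc : IsCompact (Icc (0:ℝ) T)).exists_bound_of_continuousOn hΔ_cont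
    have hΔm : AEStronglyMeasurable Δ (volume.restrict (Ioc (0:ℝ) t)) :=
      (hΔ_cont.mono fun s hs => ⟨hs.1.le, hs.2.trans htT⟩).aestronglyMeasurable
        measurableSet_Ioc
    have hΔmem : MemLp Δ 2 (volume.restrict (Ioc (0:ℝ) t)) := by
      refine MemLp.of_bound hΔm M ?_
      rw [ae_restrict_iff' measurableSet_Ioc]
      exact Eventually.of_forall fun s hs => hM s ⟨hs.1.le, hs.2.trans htT⟩
    have h1mem : MemLp (fun _ : ℝ => (1:ℝ)) 2 (volume.restrict (Ioc (0:ℝ) t)) :=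
      memLp_const 1
    have key := integral_mul_le_Lp_mul_Lq_of_nonneg h2
      (Eventually.of_forall fun s => hΔ_nonneg s)
      (Eventually.of_forall fun _ : ℝ => zero_le_one)
      (by simpa using hΔmem) (by simpa using h1mem)
    simp only [mul_one, Real.one_rpow] at key
    have e1 : (∫ _ in Ioc (0:ℝ) t, (1:ℝ)) = t := by
      simp [Real.volume_Ioc, ENNReal.toReal_ofReal ht0.le, ht0.le]
    have e2 : (∫ s in Ioc (0:ℝ) t, Δ s ^ (2:ℝ)) = ∫ s in Ioc (0:ℝ) t, Δ s ^ 2 := by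
      refine setIntegral_congr_fun measurableSet_Ioc fun s _ => ?_
      rw [show ((2:ℝ) = ((2:ℕ):ℝ)) by norm_num, Real.rpow_natCast]
    rw [e1, e2] at key
    calc I ≤ (∫ s in Ioc (0:ℝ) t, Δ s ^ 2) ^ ((1:ℝ)/2) * t ^ ((1:ℝ)/2) := key
      _ = Real.sqrt t * Real.sqrt (∫ s in Ioc (0:ℝ) t, Δ s ^ 2) := by
          rw [← Real.sqrt_eq_rpow, ← Real.sqrt_eq_rpow]
          ring
  -- main chain
  have hvolτ : volume (Ioc (0:ℝ) τ) < ⊤ := by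
    simp [Real.volume_Ioc]
  have hΔ_int_τ : IntegrableOn Δ (Ioc 0 τ) := hΔ_int_t.mono_set (Ioc_subset_Ioc_right hτt)
  have hrhs_int : IntegrableOn (fun s => ‖A‖ * Δ s + Lf * LH * I) (Ioc (0:ℝ) τ) :=
    (hΔ_int_τ.const_mul _).add (integrableOn_const hvolτ.ne)
  have hcnn : (0:ℝ) ≤ ‖A‖ := norm_nonneg _
  calc ‖(∫ s in Ioc (0:ℝ) τ, ((B (q₁ s, ℓ s) - fE (H q₁ s)) ⊔ 0)) -
        ∫ s in Ioc (0:ℝ) τ, ((B (q₂ s, ℓ s) - fE (H q₂ s)) ⊔ 0)‖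
      = ‖∫ s in Ioc (0:ℝ) τ,
          (((B (q₁ s, ℓ s) - fE (H q₁ s)) ⊔ 0) - ((B (q₂ s, ℓ s) - fE (H q₂ s)) ⊔ 0))‖ := by
        rw [integral_sub hg₁_int hg₂_int]
    _ ≤ ∫ s in Ioc (0:ℝ) τ,
          ‖((B (q₁ s, ℓ s) - fE (H q₁ s)) ⊔ 0) - ((B (q₂ s, ℓ s) - fE (H q₂ s)) ⊔ 0)‖ :=
        norm_integral_le_integral_norm _
    _ ≤ ∫ s in Ioc (0:ℝ) τ, (‖A‖ * Δ s + Lf * LH * I) := by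
        exact setIntegral_mono_on ((hg₁_int.sub hg₂_int).norm) hrhs_int
          measurableSet_Ioc hpt
    _ = ‖A‖ * (∫ s in Ioc (0:ℝ) τ, Δ s) + (Lf * LH * I) * τ := by
        rw [integral_add (hΔ_int_τ.const_mul _) (integrableOn_const hvolτ.ne),
          integral_const_mul, setIntegral_const, smul_eq_mul,
          Real.volume_real_Ioc_of_le hτ0, sub_zero, mul_comm τ]
    _ ≤ ‖A‖ * I + (Lf * LH * I) * t := by
        refine add_le_add (mul_le_mul_of_nonneg_left (hsub_I τ hτt) hcnn)
          (mul_le_mul_of_nonneg_left hτt ?_)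
        positivity
    _ = (‖A‖ + Lf * LH * t) * I := by ring
    _ ≤ (‖A‖ + Lf * LH * t) * (Real.sqrt t * Real.sqrt (∫ s in Ioc (0:ℝ) t, Δ s ^ 2)) := by
        refine mul_le_mul_of_nonneg_left hHolder ?_
        have : 0 ≤ Lf * LH * t := by positivity
        linarith
    _ = (‖A‖ * Real.sqrt t + Lf * LH * (t * Real.sqrt t)) *
          Real.sqrt (∫ s in Ioc (0:ℝ) t, Δ s ^ 2) := by ring
end

section
/- In the setting of the abstract state equation, there exists a constant C > 0, depending only on ϵ, T, L_f, L_𝓗 and the operator norm of B, with the following property: if ℓ₁, ℓ₂ : (0,T) → F are strongly measurable with ∫₀ᵀ ‖ℓᵢ(s)‖²_F ds < ∞, and q₁, q₂ : [0,T] → E are the corresponding continuous solutions of the state equation, then ‖q₁(t) − q₂(t)‖_E ≤ C ∫₀ᵗ ‖ℓ₁(s) − ℓ₂(s)‖_F ds for all t ∈ [0,T]. -/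
open MeasureTheory Filter Set Topology

lemma fE_lip {α : Type*} [MeasurableSpace α] {μ : Measure α} {Lf : ℝ} (hLf : 0 ≤ Lf)
    (f : ℝ → ℝ) (hf : ∀ x y : ℝ, |f x - f y| ≤ Lf * |x - y|)
    (fE : Lp ℝ 2 μ → Lp ℝ 2 μ)
    (hfE : ∀ v : Lp ℝ 2 μ, (fE v : α → ℝ) =ᵐ[μ] fun x => f ((v : α → ℝ) x))
    (v w : Lp ℝ 2 μ) : ‖fE v - fE w‖ ≤ Lf * ‖v - w‖ := by
  have hb : (0:Lp ℝ 2 μ) ≤ Lf • |v - w| := by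
    rw [← Lp.coeFn_le]
    filter_upwards [Lp.coeFn_smul Lf |v - w|, Lp.coeFn_abs (v - w),
      Lp.coeFn_zero (E := ℝ) (p := 2) (μ := μ)] with x h3 h4 h0
    rw [h3, h0]
    simp only [Pi.smul_apply, smul_eq_mul, Pi.zero_apply]
    rw [h4]
    positivity
  have h1 : |fE v - fE w| ≤ Lf • |v - w| := by
    rw [← Lp.coeFn_le]
    filter_upwards [Lp.coeFn_abs (fE v - fE w), Lp.coeFn_sub (fE v) (fE w),
      Lp.coeFn_smul Lf |v - w|, Lp.coeFn_abs (v - w), Lp.coeFn_sub v w,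
      hfE v, hfE w] with x h1 h2 h3 h4 h5 h6 h7
    rw [h1, h2, h3]
    simp only [Pi.sub_apply, Pi.smul_apply, smul_eq_mul]
    rw [h4, h5, h6, h7]
    simp only [Pi.sub_apply]
    exact hf _ _
  have h2 : ‖fE v - fE w‖ ≤ ‖Lf • |v - w|‖ := by
    rw [← norm_abs_eq_norm (fE v - fE w)]
    exact HasSolidNorm.solid (by rwa [abs_abs, abs_of_nonneg hb])
  calc ‖fE v - fE w‖ ≤ ‖Lf • |v - w|‖ := h2
    _ = Lf * ‖v - w‖ := by rw [norm_smul, Real.norm_eq_abs, abs_of_nonneg hLf, norm_abs_eq_norm]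

lemma gron_aux {K e x T : ℝ} (hK : 0 ≤ K) (he : 0 ≤ e) (hx : 0 ≤ x) (hxT : x ≤ T) :
    e + K * gronwallBound 0 K e x ≤ e * Real.exp (K * T) := by
  by_cases h : K = 0
  · subst h
    simp only [gronwallBound_K0, zero_mul, zero_add]
    nlinarith [Real.one_le_exp (le_refl (0:ℝ))]
  · rw [gronwallBound_of_K_ne_0 h]
    have hK' : 0 < K := lt_of_le_of_ne hK (Ne.symm h)
    have : K * (0 * Real.exp (K * x) + e / K * (Real.exp (K * x) - 1))
        = e * (Real.exp (K * x) - 1) := by field_simp; ring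
    rw [this]
    have hle : Real.exp (K * x) ≤ Real.exp (K * T) :=
      Real.exp_le_exp.mpr (by nlinarith)
    nlinarith

lemma hasDeriv_u {T t₀ : ℝ} (ht₀ : t₀ ∈ Icc 0 T) (φ : ℝ → ℝ)
    (hφ : ContinuousOn φ (Icc 0 T)) {x : ℝ} (hx : x ∈ Ico 0 t₀) :
    HasDerivWithinAt (fun t => ∫ s in Ioc (0:ℝ) t, φ s) (φ x) (Ici x) x := by
  have hxT : x ≤ T := le_trans hx.2.le ht₀.2
  have hxltT : x < T := lt_of_lt_of_le hx.2 ht₀.2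
  have hint : IntegrableOn φ (Icc 0 T) := hφ.integrableOn_compact isCompact_Icc
  have hsub : Ioc x T ⊆ Icc 0 T := fun y hy => ⟨le_trans hx.1 hy.1.le, hy.2⟩
  have hii : IntervalIntegrable φ volume 0 x :=
    (intervalIntegrable_iff_integrableOn_Ioc_of_le hx.1).mpr
      (hint.mono_set (fun y hy => ⟨hy.1.le, le_trans hy.2 hxT⟩))
  have hmem : Ioc x T ∈ 𝓝[Set.Ioi x] x := Ioc_mem_nhdsGT_of_mem ⟨le_refl x, hxltT⟩
  have hmeas : StronglyMeasurableAtFilter φ (𝓝[Set.Ioi x] x) volume :=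
    ⟨Ioc x T, hmem, (hφ.mono hsub).aestronglyMeasurable measurableSet_Ioc⟩
  have hcont : ContinuousWithinAt φ (Set.Ioi x) x :=
    (hφ x ⟨hx.1, hxT⟩).mono_of_mem_nhdsWithin (mem_of_superset hmem hsub)
  have hU := intervalIntegral.integral_hasDerivWithinAt_right (f := φ)
    (s := Set.Ici x) (t := Set.Ioi x) hii hmeas hcont
  exact hU.congr (fun y hy => (intervalIntegral.integral_of_le (le_trans hx.1 hy)).symm)
    ((intervalIntegral.integral_of_le hx.1).symm)


set_option maxHeartbeats 2000000 in
/-- **Lipschitz continuity of the control-to-state map of the abstract state equation.**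
There is a constant `C > 0`, depending only on `ϵ`, `T`, `Lf`, `LH` and a bound `M` on the
operator norm of `B`, such that any two solutions `q₁, q₂` of the state equation with data
`ℓ₁, ℓ₂` satisfy `‖q₁(t) − q₂(t)‖ ≤ C ∫₀ᵗ ‖ℓ₁(s) − ℓ₂(s)‖ ds` for all `t ∈ [0,T]`. -/
theorem control_to_state_lipschitz
    {α : Type*} [MeasurableSpace α] (μ : Measure α) [IsFiniteMeasure μ]
    {F : Type*} [NormedAddCommGroup F] [InnerProductSpace ℝ F] [CompleteSpace F]
    (ϵ T Lf LH M : ℝ) (hϵ : 0 < ϵ) (hT : 0 < T) (hLf : 0 ≤ Lf) (hLH : 0 ≤ LH) (hM : 0 ≤ M) :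
    ∃ C > (0:ℝ),
      ∀ B : Lp ℝ 2 μ × F →L[ℝ] Lp ℝ 2 μ, ‖B‖ ≤ M →
      ∀ f : ℝ → ℝ, (∀ x y : ℝ, |f x - f y| ≤ Lf * |x - y|) →
      ∀ fE : Lp ℝ 2 μ → Lp ℝ 2 μ,
        (∀ v : Lp ℝ 2 μ, (fE v : α → ℝ) =ᵐ[μ] fun x => f ((v : α → ℝ) x)) →
      ∀ H : (ℝ → Lp ℝ 2 μ) → (ℝ → Lp ℝ 2 μ),
        (∀ q : ℝ → Lp ℝ 2 μ, ContinuousOn q (Icc 0 T) → ContinuousOn (H q) (Icc 0 T)) →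
        (∀ q₁ q₂ : ℝ → Lp ℝ 2 μ, ContinuousOn q₁ (Icc 0 T) → ContinuousOn q₂ (Icc 0 T) →
          ∀ t ∈ Icc (0:ℝ) T,
            ‖H q₁ t - H q₂ t‖ ≤ LH * ∫ s in Ioc (0:ℝ) t, ‖q₁ s - q₂ s‖) →
      ∀ ℓ₁ ℓ₂ : ℝ → F,
        MemLp ℓ₁ 2 (volume.restrict (Ioc (0:ℝ) T)) →
        MemLp ℓ₂ 2 (volume.restrict (Ioc (0:ℝ) T)) →
      ∀ q₁ q₂ : ℝ → Lp ℝ 2 μ,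
        (ContinuousOn q₁ (Icc 0 T) ∧
          ∀ t ∈ Icc (0:ℝ) T,
            q₁ t = ϵ⁻¹ • ∫ s in Ioc (0:ℝ) t, ((B (q₁ s, ℓ₁ s) - fE (H q₁ s)) ⊔ 0)) →
        (ContinuousOn q₂ (Icc 0 T) ∧
          ∀ t ∈ Icc (0:ℝ) T,
            q₂ t = ϵ⁻¹ • ∫ s in Ioc (0:ℝ) t, ((B (q₂ s, ℓ₂ s) - fE (H q₂ s)) ⊔ 0)) →
      ∀ t ∈ Icc (0:ℝ) T,
        ‖q₁ t - q₂ t‖ ≤ C * ∫ s in Ioc (0:ℝ) t, ‖ℓ₁ s - ℓ₂ s‖ := by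
  set K : ℝ := ϵ⁻¹ * (M + Lf * LH * T) with hKdef
  set A : ℝ := ϵ⁻¹ * M with hAdef
  have hA : 0 ≤ A := by positivity
  have hK : 0 ≤ K := by positivity
  refine ⟨A * Real.exp (K * T) + 1, by positivity, ?_⟩
  intro B hB f hf fE hfE H hHcont hHlip ℓ₁ ℓ₂ hℓ₁ hℓ₂ q₁ q₂ hq₁ hq₂ t₀ ht₀
  obtain ⟨hq₁c, hq₁e⟩ := hq₁
  obtain ⟨hq₂c, hq₂e⟩ := hq₂
  haveI : IsFiniteMeasure (volume.restrict (Ioc (0:ℝ) T)) := by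
    constructor
    rw [Measure.restrict_apply_univ, Real.volume_Ioc]
    exact ENNReal.ofReal_lt_top
  set φ : ℝ → ℝ := fun s => ‖q₁ s - q₂ s‖ with hφdef
  set u : ℝ → ℝ := fun t => ∫ s in Ioc (0:ℝ) t, φ s with hudef
  set G : ℝ → ℝ := fun t => ∫ s in Ioc (0:ℝ) t, ‖ℓ₁ s - ℓ₂ s‖ with hGdef
  have hφcont : ContinuousOn φ (Icc 0 T) := (hq₁c.sub hq₂c).norm
  have hφint : IntegrableOn φ (Icc 0 T) := hφcont.integrableOn_compact isCompact_Icc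
  have hu_nonneg : ∀ t, 0 ≤ u t := fun t =>
    setIntegral_nonneg measurableSet_Ioc (fun s _ => norm_nonneg _)
  have hG_nonneg : ∀ t, 0 ≤ G t := fun t =>
    setIntegral_nonneg measurableSet_Ioc (fun s _ => norm_nonneg _)
  have hℓint : IntegrableOn (fun s => ‖ℓ₁ s - ℓ₂ s‖) (Ioc (0:ℝ) T) volume := by
    have := ((hℓ₁.sub hℓ₂).integrable one_le_two).norm
    exact this.congr (Eventually.of_forall (fun s => by simp [Pi.sub_apply]))
  have hu_mono : ∀ s t : ℝ, s ≤ t → t ≤ T → u s ≤ u t := by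
    intro s t hst htT
    refine setIntegral_mono_set (hφint.mono_set (fun y hy => ⟨hy.1.le, le_trans hy.2 htT⟩))
      (Eventually.of_forall (fun y => norm_nonneg _))
      (HasSubset.Subset.eventuallyLE (Ioc_subset_Ioc le_rfl hst))
  have hG_mono : ∀ s t : ℝ, s ≤ t → t ≤ T → G s ≤ G t := by
    intro s t hst htT
    refine setIntegral_mono_set (hℓint.mono_set (Ioc_subset_Ioc le_rfl htT))
      (Eventually.of_forall (fun y => norm_nonneg _))
      (HasSubset.Subset.eventuallyLE (Ioc_subset_Ioc le_rfl hst))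
  have hfEl : ∀ v w, ‖fE v - fE w‖ ≤ Lf * ‖v - w‖ := fE_lip hLf f hf fE hfE
  have hfEcont : Continuous fE :=
    (LipschitzWith.of_dist_le_mul (K := Real.toNNReal Lf) (fun v w => by
      rw [dist_eq_norm, dist_eq_norm, Real.coe_toNNReal _ hLf]; exact hfEl v w)).continuous
  have hBle : ∀ (x : Lp ℝ 2 μ) (y : F), ‖B (x, y)‖ ≤ M * (‖x‖ + ‖y‖) := by
    intro x y
    calc ‖B (x, y)‖ ≤ ‖B‖ * ‖((x, y) : Lp ℝ 2 μ × F)‖ := B.le_opNorm _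
      _ ≤ M * (‖x‖ + ‖y‖) := by
          refine mul_le_mul hB ?_ (norm_nonneg _) hM
          rw [Prod.norm_def]
          exact max_le (le_add_of_nonneg_right (norm_nonneg _))
            (le_add_of_nonneg_left (norm_nonneg _))
  -- integrability of the positive-part integrand
  have key : ∀ (q : ℝ → Lp ℝ 2 μ) (ℓ : ℝ → F), ContinuousOn q (Icc 0 T) →
      MemLp ℓ 2 (volume.restrict (Ioc (0:ℝ) T)) →
      IntegrableOn (fun s => (B (q s, ℓ s) - fE (H q s)) ⊔ 0) (Ioc (0:ℝ) T) volume := by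
    intro q ℓ hqc hℓ
    have hℓi : IntegrableOn ℓ (Ioc (0:ℝ) T) volume := hℓ.integrable one_le_two
    have hqm : AEStronglyMeasurable q (volume.restrict (Ioc (0:ℝ) T)) :=
      (hqc.mono Ioc_subset_Icc_self).aestronglyMeasurable measurableSet_Ioc
    have hHc : ContinuousOn (fun s => fE (H q s)) (Icc 0 T) :=
      hfEcont.comp_continuousOn (hHcont q hqc)
    have hHm : AEStronglyMeasurable (fun s => fE (H q s)) (volume.restrict (Ioc (0:ℝ) T)) :=
      (hHc.mono Ioc_subset_Icc_self).aestronglyMeasurable measurableSet_Ioc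
    have hBm : AEStronglyMeasurable (fun s => B (q s, ℓ s)) (volume.restrict (Ioc (0:ℝ) T)) :=
      B.continuous.comp_aestronglyMeasurable (hqm.prodMk hℓi.aestronglyMeasurable)
    have hmeas : AEStronglyMeasurable (fun s => (B (q s, ℓ s) - fE (H q s)) ⊔ 0)
        (volume.restrict (Ioc (0:ℝ) T)) := (hBm.sub hHm).sup aestronglyMeasurable_const
    have hg1 : IntegrableOn (fun s => M * ‖q s‖ + ‖fE (H q s)‖) (Ioc (0:ℝ) T) volume :=
      (((continuousOn_const.mul hqc.norm).add hHc.norm).integrableOn_compact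
        isCompact_Icc).mono_set Ioc_subset_Icc_self
    have hg : IntegrableOn (fun s => M * ‖q s‖ + ‖fE (H q s)‖ + M * ‖ℓ s‖)
        (Ioc (0:ℝ) T) volume := hg1.add (hℓi.norm.const_mul M)
    refine Integrable.mono' hg hmeas (Eventually.of_forall (fun s => ?_))
    have h0 : ‖(B (q s, ℓ s) - fE (H q s)) ⊔ 0‖ ≤ ‖B (q s, ℓ s) - fE (H q s)‖ := by
      have := norm_sup_sub_sup_le_norm (B (q s, ℓ s) - fE (H q s)) 0 0
      simpa using this
    refine h0.trans ((norm_sub_le _ _).trans ?_)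
    have := hBle (q s) (ℓ s)
    nlinarith [norm_nonneg (ℓ s), norm_nonneg (q s)]
  -- pointwise bound on the difference of integrands
  set P₁ : ℝ → Lp ℝ 2 μ := fun s => (B (q₁ s, ℓ₁ s) - fE (H q₁ s)) ⊔ 0 with hP₁def
  set P₂ : ℝ → Lp ℝ 2 μ := fun s => (B (q₂ s, ℓ₂ s) - fE (H q₂ s)) ⊔ 0 with hP₂def
  have hP₁int : IntegrableOn P₁ (Ioc (0:ℝ) T) volume := key q₁ ℓ₁ hq₁c hℓ₁
  have hP₂int : IntegrableOn P₂ (Ioc (0:ℝ) T) volume := key q₂ ℓ₂ hq₂c hℓ₂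
  have hPdiff : ∀ s ∈ Icc (0:ℝ) T,
      ‖P₁ s - P₂ s‖ ≤ M * φ s + M * ‖ℓ₁ s - ℓ₂ s‖ + Lf * ‖H q₁ s - H q₂ s‖ := by
    intro s hs
    have h0 : ‖P₁ s - P₂ s‖
        ≤ ‖(B (q₁ s, ℓ₁ s) - fE (H q₁ s)) - (B (q₂ s, ℓ₂ s) - fE (H q₂ s))‖ :=
      norm_sup_sub_sup_le_norm _ _ _
    refine h0.trans ?_
    rw [sub_sub_sub_comm]
    refine (norm_sub_le _ _).trans ?_
    have h1 : B (q₁ s, ℓ₁ s) - B (q₂ s, ℓ₂ s) = B (q₁ s - q₂ s, ℓ₁ s - ℓ₂ s) := by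
      rw [← ContinuousLinearMap.map_sub, Prod.mk_sub_mk]
    rw [h1]
    have h2 := hBle (q₁ s - q₂ s) (ℓ₁ s - ℓ₂ s)
    have h3 := hfEl (H q₁ s) (H q₂ s)
    simp only [hφdef]
    nlinarith [norm_nonneg (H q₁ s - H q₂ s)]
  -- the main integral inequality
  have main : ∀ t ∈ Icc (0:ℝ) T, φ t ≤ A * G t + K * u t := by
    intro t ht
    have hsub : Ioc (0:ℝ) t ⊆ Ioc (0:ℝ) T := Ioc_subset_Ioc le_rfl ht.2
    have hP₁t : IntegrableOn P₁ (Ioc (0:ℝ) t) volume := hP₁int.mono_set hsub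
    have hP₂t : IntegrableOn P₂ (Ioc (0:ℝ) t) volume := hP₂int.mono_set hsub
    have h1 : q₁ t - q₂ t = ϵ⁻¹ • (∫ s in Ioc (0:ℝ) t, (P₁ s - P₂ s)) := by
      rw [hq₁e t ht, hq₂e t ht, ← smul_sub, integral_sub hP₁t hP₂t]
    have h2 : φ t = ϵ⁻¹ * ‖∫ s in Ioc (0:ℝ) t, (P₁ s - P₂ s)‖ := by
      rw [hφdef]
      simp only [h1, norm_smul, Real.norm_eq_abs, abs_of_pos (inv_pos.mpr hϵ)]
    have h3 : ‖∫ s in Ioc (0:ℝ) t, (P₁ s - P₂ s)‖ ≤ ∫ s in Ioc (0:ℝ) t, ‖P₁ s - P₂ s‖ :=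
      norm_integral_le_integral_norm _
    have hIoct : volume (Ioc (0:ℝ) t) < ⊤ := by
      rw [Real.volume_Ioc]; exact ENNReal.ofReal_lt_top
    have h4 : ∫ s in Ioc (0:ℝ) t, ‖P₁ s - P₂ s‖
        ≤ ∫ s in Ioc (0:ℝ) t, (M * φ s + M * ‖ℓ₁ s - ℓ₂ s‖ + Lf * (LH * u t)) := by
      refine setIntegral_mono_on ((hP₁t.sub hP₂t).norm) ?_ measurableSet_Ioc ?_
      · exact (((hφint.mono_set (fun y hy => ⟨hy.1.le, le_trans hy.2 ht.2⟩)).const_mul M).add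
          ((hℓint.mono_set hsub).const_mul M)).add ((integrableOn_const_iff).mpr (Or.inr hIoct))
      · intro s hs
        have hsT : s ∈ Icc (0:ℝ) T := ⟨hs.1.le, le_trans hs.2 ht.2⟩
        have hp := hPdiff s hsT
        have hH := hHlip q₁ q₂ hq₁c hq₂c s hsT
        have hus : u s ≤ u t := hu_mono s t hs.2 ht.2
        have hHu : ‖H q₁ s - H q₂ s‖ ≤ LH * u s := hH
        nlinarith [mul_le_mul_of_nonneg_left hHu hLf,
          mul_le_mul_of_nonneg_left hus (mul_nonneg hLf hLH)]
    have hφt : IntegrableOn φ (Ioc (0:ℝ) t) volume :=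
      hφint.mono_set (fun y hy => ⟨hy.1.le, le_trans hy.2 ht.2⟩)
    have hℓt : IntegrableOn (fun s => ‖ℓ₁ s - ℓ₂ s‖) (Ioc (0:ℝ) t) volume :=
      hℓint.mono_set hsub
    have h5 : ∫ s in Ioc (0:ℝ) t, (M * φ s + M * ‖ℓ₁ s - ℓ₂ s‖ + Lf * (LH * u t))
        = M * u t + M * G t + Lf * (LH * u t) * t := by
      calc ∫ s in Ioc (0:ℝ) t, (M * φ s + M * ‖ℓ₁ s - ℓ₂ s‖ + Lf * (LH * u t))
          = (∫ s in Ioc (0:ℝ) t, (M * φ s + M * ‖ℓ₁ s - ℓ₂ s‖))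
            + ∫ _s in Ioc (0:ℝ) t, (Lf * (LH * u t)) :=
            integral_add ((hφt.const_mul M).add (hℓt.const_mul M))
              ((integrableOn_const_iff).mpr (Or.inr hIoct))
        _ = ((∫ s in Ioc (0:ℝ) t, M * φ s) + ∫ s in Ioc (0:ℝ) t, M * ‖ℓ₁ s - ℓ₂ s‖)
            + ∫ _s in Ioc (0:ℝ) t, (Lf * (LH * u t)) := by
            rw [integral_add (hφt.const_mul M) (hℓt.const_mul M)]
        _ = (M * u t + M * G t) + (Lf * (LH * u t)) * t := by
            rw [integral_const_mul, integral_const_mul, setIntegral_const, smul_eq_mul,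
              Real.volume_real_Ioc_of_le ht.1, sub_zero]
            ring
        _ = M * u t + M * G t + Lf * (LH * u t) * t := by ring
    have h6 : φ t ≤ ϵ⁻¹ * (M * u t + M * G t + Lf * (LH * u t) * t) := by
      rw [h2, ← h5]
      exact mul_le_mul_of_nonneg_left (h3.trans h4) (inv_pos.mpr hϵ).le
    refine h6.trans ?_
    rw [hAdef, hKdef]
    have hut := hu_nonneg t
    have hϵi : (0:ℝ) < ϵ⁻¹ := inv_pos.mpr hϵ
    nlinarith [mul_le_mul_of_nonneg_left (mul_le_mul_of_nonneg_left ht.2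
      (mul_nonneg (mul_nonneg hLf hLH) hut)) hϵi.le]
  -- Gronwall
  set e : ℝ := A * G t₀ with hedef
  have he : 0 ≤ e := mul_nonneg hA (hG_nonneg t₀)
  have hucont : ContinuousOn u (Icc 0 t₀) :=
    intervalIntegral.continuousOn_primitive (hφint.mono_set (Icc_subset_Icc le_rfl ht₀.2))
  have hud : ∀ x ∈ Ico (0:ℝ) t₀, HasDerivWithinAt u (φ x) (Ici x) x := fun x hx =>
    hasDeriv_u ht₀ φ hφcont hx
  have hbound : ∀ x ∈ Ico (0:ℝ) t₀, ‖φ x‖ ≤ K * ‖u x‖ + e := by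
    intro x hx
    have hxT : x ∈ Icc (0:ℝ) T := ⟨hx.1, le_trans hx.2.le ht₀.2⟩
    have h := main x hxT
    have hGx : G x ≤ G t₀ := hG_mono x t₀ hx.2.le ht₀.2
    rw [Real.norm_eq_abs, abs_of_nonneg (norm_nonneg _),
      Real.norm_eq_abs, abs_of_nonneg (hu_nonneg x)]
    nlinarith
  have hu0 : ‖u 0‖ ≤ 0 := by
    simp only [hudef, Ioc_self, Measure.restrict_empty, integral_zero_measure, norm_zero, le_refl]
  have hgr := norm_le_gronwallBound_of_norm_deriv_right_le hucont hud hu0 hbound t₀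
    ⟨ht₀.1, le_refl t₀⟩
  rw [Real.norm_eq_abs, abs_of_nonneg (hu_nonneg t₀), sub_zero] at hgr
  have hfinal : φ t₀ ≤ e * Real.exp (K * T) := by
    have h := main t₀ ht₀
    have h2 : K * u t₀ ≤ K * gronwallBound 0 K e t₀ := mul_le_mul_of_nonneg_left hgr hK
    have h3 := gron_aux hK he ht₀.1 ht₀.2
    nlinarith
  calc φ t₀ ≤ e * Real.exp (K * T) := hfinal
    _ = A * Real.exp (K * T) * G t₀ := by rw [hedef]; ring
    _ ≤ (A * Real.exp (K * T) + 1) * G t₀ := by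
        have := hG_nonneg t₀
        nlinarith
end

section
/- Let E be a real Hilbert space, T > 0, K ≥ 0, and let H := L²((0,T); E) be the Hilbert space of (equivalence classes of) square-integrable E-valued functions on (0,T). Let A : H → H be a bounded linear operator such that for every δ ∈ H: ‖(Aδ)(t)‖_E ≤ K ∫₀ᵗ ‖δ(s)‖_E ds for a.e. t ∈ (0,T). Then the Hilbert-space adjoint A* satisfies: for every δ ∈ H, ‖(A*δ)(t)‖_E ≤ K ∫ₜ^T ‖δ(s)‖_E ds for a.e. t ∈ (0,T). -/
open MeasureTheory Filter Set

set_option maxHeartbeats 1000000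

/-- **Adjoint of a Volterra-type operator on `L²((0,T);E)` satisfies the reversed
Volterra bound.**  If `‖(Aδ)(t)‖ ≤ K ∫₀ᵗ ‖δ(s)‖ ds` a.e. for every `δ`, then
`‖(A*δ)(t)‖ ≤ K ∫ₜᵀ ‖δ(s)‖ ds` a.e. for every `δ`. -/
theorem adjoint_volterra_bound
    {E : Type*} [NormedAddCommGroup E] [InnerProductSpace ℝ E] [CompleteSpace E]
    (T K : ℝ) (hT : 0 < T) (hK : 0 ≤ K)
    (A : Lp E 2 (volume.restrict (Ioc (0:ℝ) T)) →L[ℝ] Lp E 2 (volume.restrict (Ioc (0:ℝ) T)))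
    (hA : ∀ δ : Lp E 2 (volume.restrict (Ioc (0:ℝ) T)),
      ∀ᵐ t ∂(volume.restrict (Ioc (0:ℝ) T)),
        ‖(A δ : ℝ → E) t‖ ≤ K * ∫ s in Ioc (0:ℝ) t, ‖(δ : ℝ → E) s‖) :
    ∀ δ : Lp E 2 (volume.restrict (Ioc (0:ℝ) T)),
      ∀ᵐ t ∂(volume.restrict (Ioc (0:ℝ) T)),
        ‖(ContinuousLinearMap.adjoint A δ : ℝ → E) t‖ ≤ K * ∫ s in Ioc t T, ‖(δ : ℝ → E) s‖ := by
  intro δ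
  haveI : IsFiniteMeasure (volume.restrict (Ioc (0:ℝ) T)) := by
    constructor
    rw [Measure.restrict_apply_univ]
    exact measure_Ioc_lt_top
  have hmem : ∀ᵐ t ∂(volume.restrict (Ioc (0:ℝ) T)), t ∈ Ioc (0:ℝ) T := ae_restrict_mem measurableSet_Ioc
  set g : Lp E 2 (volume.restrict (Ioc (0:ℝ) T)) := ContinuousLinearMap.adjoint A δ with hgdef
  have hgm : StronglyMeasurable (⇑g) := Lp.stronglyMeasurable g
  have hδm : StronglyMeasurable ((δ : ℝ → E)) := Lp.stronglyMeasurable δ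
  have hδint : Integrable (fun s => ‖(δ : ℝ → E) s‖) (volume.restrict (Ioc (0:ℝ) T)) :=
    ((Lp.memLp δ).integrable (by norm_num)).norm
  have hgint : Integrable (fun s => ‖(g : ℝ → E) s‖) (volume.restrict (Ioc (0:ℝ) T)) :=
    ((Lp.memLp g).integrable (by norm_num)).norm
  -- the bounding function
  set h : ℝ → ℝ := fun t => K * ∫ s in Ioc t T, ‖(δ : ℝ → E) s‖ ∂(volume.restrict (Ioc (0:ℝ) T)) with hhdef
  have hnonneg : ∀ t, 0 ≤ h t := fun t =>
    mul_nonneg hK (integral_nonneg fun s => norm_nonneg _)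
  have hanti : Antitone fun t => ∫ s in Ioc t T, ‖(δ : ℝ → E) s‖ ∂(volume.restrict (Ioc (0:ℝ) T)) := by
    intro t₁ t₂ h12
    exact setIntegral_mono_set hδint.integrableOn
      (Eventually.of_forall fun s => norm_nonneg _)
      (HasSubset.Subset.eventuallyLE (Ioc_subset_Ioc_left h12))
  have hmeas : Measurable h := (hanti.measurable).const_mul K
  have hbdd : ∀ t, h t ≤ K * ∫ s, ‖(δ : ℝ → E) s‖ ∂(volume.restrict (Ioc (0:ℝ) T)) := fun t =>
    mul_le_mul_of_nonneg_left
      (setIntegral_le_integral hδint (Eventually.of_forall fun s => norm_nonneg _)) hK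
  -- the bad set
  set S : Set ℝ := {t | h t < ‖(g : ℝ → E) t‖} with hSdef
  have hS : MeasurableSet S := measurableSet_lt hmeas hgm.norm.measurable
  -- the test function
  have hFmem : MemLp (S.indicator (⇑g)) 2 (volume.restrict (Ioc (0:ℝ) T)) := (Lp.memLp g).indicator hS
  set F : Lp E 2 (volume.restrict (Ioc (0:ℝ) T)) := hFmem.toLp _ with hFdef
  have hFcoe : ⇑F =ᵐ[(volume.restrict (Ioc (0:ℝ) T))] S.indicator ⇑g := hFmem.coeFn_toLp
  have hFm : StronglyMeasurable (⇑F) := Lp.stronglyMeasurable F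
  have hFint : Integrable (fun s => ‖(F : ℝ → E) s‖) (volume.restrict (Ioc (0:ℝ) T)) :=
    ((Lp.memLp F).integrable (by norm_num)).norm
  -- Φ t = ∫_{(0,t]} ‖F‖ dμ
  set Φ : ℝ → ℝ := fun t => ∫ s in Ioc 0 t, ‖(F : ℝ → E) s‖ ∂(volume.restrict (Ioc (0:ℝ) T)) with hΦdef
  have hΦmono : Monotone Φ := by
    intro t₁ t₂ h12
    exact setIntegral_mono_set hFint.integrableOn
      (Eventually.of_forall fun s => norm_nonneg _)
      (HasSubset.Subset.eventuallyLE (Ioc_subset_Ioc_right h12))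
  have hΦnonneg : ∀ t, 0 ≤ Φ t := fun t => integral_nonneg fun s => norm_nonneg _
  have hΦbdd : ∀ t, Φ t ≤ ∫ s, ‖(F : ℝ → E) s‖ ∂(volume.restrict (Ioc (0:ℝ) T)) := fun t =>
    setIntegral_le_integral hFint (Eventually.of_forall fun s => norm_nonneg _)
  -- Step A : ⟪g, F⟫ = ∫_S ‖g‖²
  have stepA : (inner ℝ g F : ℝ) = ∫ t in S, ‖(g : ℝ → E) t‖ ^ 2 ∂(volume.restrict (Ioc (0:ℝ) T)) := by
    rw [MeasureTheory.L2.inner_def, ← integral_indicator hS]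
    refine integral_congr_ae ?_
    filter_upwards [hFcoe] with t ht
    rw [ht]
    by_cases hts : t ∈ S
    · simp [indicator_of_mem hts, real_inner_self_eq_norm_sq]
    · simp [indicator_of_notMem hts]
  -- Step B : adjoint
  have stepB : (inner ℝ g F : ℝ) = inner ℝ δ (A F) := by
    rw [hgdef]; exact ContinuousLinearMap.adjoint_inner_left A F δ
  -- integrability of norm products
  have hprodint : Integrable (fun t => ‖(δ : ℝ → E) t‖ * ‖(A F : ℝ → E) t‖) (volume.restrict (Ioc (0:ℝ) T)) := by
    have hδ2 : MemLp (fun t => ‖(δ : ℝ → E) t‖) 2 (volume.restrict (Ioc (0:ℝ) T)) :=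
      (Lp.memLp δ).norm
    have hAF2 : MemLp (fun t => ‖(A F : ℝ → E) t‖) 2 (volume.restrict (Ioc (0:ℝ) T)) :=
      (Lp.memLp (A F)).norm
    have hint := MeasureTheory.L2.integrable_inner (𝕜 := ℝ) (hδ2.toLp _) (hAF2.toLp _)
    refine hint.congr ?_
    filter_upwards [hδ2.coeFn_toLp, hAF2.coeFn_toLp] with t h1 h2
    rw [RCLike.inner_apply, conj_trivial, h1, h2, mul_comm]
  -- Step C : Cauchy–Schwarz pointwise
  have stepC : (inner ℝ δ (A F) : ℝ) ≤ ∫ t, ‖(δ : ℝ → E) t‖ * ‖(A F : ℝ → E) t‖ ∂(volume.restrict (Ioc (0:ℝ) T)) := by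
    rw [MeasureTheory.L2.inner_def]
    exact integral_mono_ae (MeasureTheory.L2.integrable_inner δ (A F)) hprodint
      (Eventually.of_forall fun t => real_inner_le_norm _ _)
  -- Step D : apply the Volterra hypothesis
  have hDbound : ∀ᵐ t ∂(volume.restrict (Ioc (0:ℝ) T)), ‖(A F : ℝ → E) t‖ ≤ K * Φ t := by
    filter_upwards [hA F, hmem] with t htb ht
    refine htb.trans (le_of_eq ?_)
    congr 1
    rw [hΦdef]
    congr 1
    rw [Measure.restrict_restrict measurableSet_Ioc, Ioc_inter_Ioc, max_self,
      min_eq_left ht.2]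
  have hmajint : Integrable (fun t => ‖(δ : ℝ → E) t‖ * (K * Φ t)) (volume.restrict (Ioc (0:ℝ) T)) := by
    have : Integrable (fun t => (K * Φ t) * ‖(δ : ℝ → E) t‖) (volume.restrict (Ioc (0:ℝ) T)) := by
      refine Integrable.bdd_mul (c := K * ∫ s, ‖(F : ℝ → E) s‖ ∂(volume.restrict (Ioc (0:ℝ) T))) hδint
        ((hΦmono.measurable.const_mul K).aestronglyMeasurable) ?_
      refine Eventually.of_forall fun t => ?_
      rw [Real.norm_eq_abs, abs_of_nonneg (mul_nonneg hK (hΦnonneg t))]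
      exact mul_le_mul_of_nonneg_left (hΦbdd t) hK
    simpa [mul_comm] using this
  have stepD : ∫ t, ‖(δ : ℝ → E) t‖ * ‖(A F : ℝ → E) t‖ ∂(volume.restrict (Ioc (0:ℝ) T))
      ≤ ∫ t, ‖(δ : ℝ → E) t‖ * (K * Φ t) ∂(volume.restrict (Ioc (0:ℝ) T)) := by
    refine integral_mono_ae hprodint hmajint ?_
    filter_upwards [hDbound] with t ht
    exact mul_le_mul_of_nonneg_left ht (norm_nonneg _)
  -- Step E : Fubini
  have stepE : ∫ t, ‖(δ : ℝ → E) t‖ * (K * Φ t) ∂(volume.restrict (Ioc (0:ℝ) T))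
      = ∫ s, ‖(F : ℝ → E) s‖ * h s ∂(volume.restrict (Ioc (0:ℝ) T)) := by
    set f : ℝ → ℝ → ℝ := fun t s =>
      ‖(δ : ℝ → E) t‖ * ((Ioc (0:ℝ) t).indicator (fun u => K * ‖(F : ℝ → E) u‖) s) with hfdef
    have hM : MeasurableSet {p : ℝ × ℝ | p.2 ∈ Ioc 0 p.1} := by
      have : {p : ℝ × ℝ | p.2 ∈ Ioc 0 p.1}
          = {p : ℝ × ℝ | (0:ℝ) < p.2} ∩ {p : ℝ × ℝ | p.2 ≤ p.1} := rfl
      rw [this]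
      exact (measurableSet_lt measurable_const measurable_snd).inter
        (measurableSet_le measurable_snd measurable_fst)
    have huncurry : Function.uncurry f = fun p : ℝ × ℝ =>
        ({p : ℝ × ℝ | p.2 ∈ Ioc 0 p.1}.indicator
          (fun p => ‖(δ : ℝ → E) p.1‖ * (K * ‖(F : ℝ → E) p.2‖)) p) := by
      funext p
      obtain ⟨t, s⟩ := p
      by_cases hp : s ∈ Ioc (0:ℝ) t
      · have hp' : (t, s) ∈ {p : ℝ × ℝ | p.2 ∈ Ioc 0 p.1} := hp
        simp only [Function.uncurry, hfdef, indicator_of_mem hp, indicator_of_mem hp']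
      · have hp' : (t, s) ∉ {p : ℝ × ℝ | p.2 ∈ Ioc 0 p.1} := hp
        simp only [Function.uncurry, hfdef, indicator_of_notMem hp,
          indicator_of_notMem hp', mul_zero]
    have hfint : Integrable (Function.uncurry f)
        ((volume.restrict (Ioc (0:ℝ) T)).prod (volume.restrict (Ioc (0:ℝ) T))) := by
      rw [huncurry]
      refine Integrable.mono' (Integrable.mul_prod hδint (hFint.const_mul K)) ?_ ?_
      · exact (((hδm.norm.measurable.comp measurable_fst).mul
          ((hFm.norm.measurable.const_mul K).comp measurable_snd)).indicator
          hM).aestronglyMeasurable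
      · refine Eventually.of_forall fun p => ?_
        rw [Real.norm_eq_abs, abs_of_nonneg (indicator_nonneg (fun q _ => by positivity) p)]
        exact indicator_le_self' (fun q _ => by positivity) p
    calc ∫ t, ‖(δ : ℝ → E) t‖ * (K * Φ t) ∂(volume.restrict (Ioc (0:ℝ) T))
        = ∫ t, ∫ s, f t s ∂(volume.restrict (Ioc (0:ℝ) T)) ∂(volume.restrict (Ioc (0:ℝ) T)) := by
          refine integral_congr_ae (Eventually.of_forall fun t => ?_)
          have : ∫ s, f t s ∂(volume.restrict (Ioc (0:ℝ) T))
              = ‖(δ : ℝ → E) t‖ * (K * Φ t) := by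
            simp only [hfdef, hΦdef]
            rw [integral_const_mul, integral_indicator measurableSet_Ioc, integral_const_mul]
          exact this.symm
      _ = ∫ s, ∫ t, f t s ∂(volume.restrict (Ioc (0:ℝ) T)) ∂(volume.restrict (Ioc (0:ℝ) T)) :=
          integral_integral_swap hfint
      _ = ∫ s, ‖(F : ℝ → E) s‖ * h s ∂(volume.restrict (Ioc (0:ℝ) T)) := by
          refine integral_congr_ae ?_
          filter_upwards [hmem] with s hs
          have hind : (fun t => f t s)
              = (Ici s).indicator (fun t => ‖(δ : ℝ → E) t‖ * (K * ‖(F : ℝ → E) s‖)) := by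
            funext t
            by_cases hts : s ≤ t
            · have hm1 : s ∈ Ioc (0:ℝ) t := ⟨hs.1, hts⟩
              have hm2 : t ∈ Ici s := hts
              simp only [hfdef, indicator_of_mem hm1, indicator_of_mem hm2]
            · have hm1 : s ∉ Ioc (0:ℝ) t := fun hc => hts hc.2
              have hm2 : t ∉ Ici s := hts
              simp only [hfdef, indicator_of_notMem hm1, indicator_of_notMem hm2, mul_zero]
          rw [hind, integral_indicator measurableSet_Ici, integral_mul_const]
          have hres1 : (volume.restrict (Ioc (0:ℝ) T)).restrict (Ici s)
              = volume.restrict (Ioc s T) := by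
            rw [Measure.restrict_restrict measurableSet_Ici]
            have hset : Ici s ∩ Ioc 0 T = Icc s T := by
              ext x
              simp only [mem_inter_iff, mem_Ici, mem_Ioc, mem_Icc]
              constructor
              · rintro ⟨h1, _, h3⟩; exact ⟨h1, h3⟩
              · rintro ⟨h1, h2⟩; exact ⟨h1, lt_of_lt_of_le hs.1 h1, h2⟩
            rw [hset]
            exact (Measure.restrict_congr_set Ioc_ae_eq_Icc).symm
          have hres2 : (volume.restrict (Ioc (0:ℝ) T)).restrict (Ioc s T)
              = volume.restrict (Ioc s T) := by
            rw [Measure.restrict_restrict measurableSet_Ioc, Ioc_inter_Ioc, min_self,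
              max_eq_left hs.1.le]
          rw [hres1]
          simp only [hhdef]
          rw [hres2]
          ring
  -- Step F : rewrite RHS over S
  have stepF : ∫ s, ‖(F : ℝ → E) s‖ * h s ∂(volume.restrict (Ioc (0:ℝ) T)) = ∫ s in S, ‖(g : ℝ → E) s‖ * h s ∂(volume.restrict (Ioc (0:ℝ) T)) := by
    rw [← integral_indicator hS]
    refine integral_congr_ae ?_
    filter_upwards [hFcoe] with s hs
    rw [hs]
    by_cases hsS : s ∈ S
    · simp [indicator_of_mem hsS]
    · simp [indicator_of_notMem hsS]
  have hfinal : ∫ t in S, ‖(g : ℝ → E) t‖ ^ 2 ∂(volume.restrict (Ioc (0:ℝ) T)) ≤ ∫ t in S, ‖(g : ℝ → E) t‖ * h t ∂(volume.restrict (Ioc (0:ℝ) T)) := by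
    calc ∫ t in S, ‖(g : ℝ → E) t‖ ^ 2 ∂(volume.restrict (Ioc (0:ℝ) T)) = (inner ℝ g F : ℝ) := stepA.symm
      _ = inner ℝ δ (A F) := stepB
      _ ≤ ∫ t, ‖(δ : ℝ → E) t‖ * ‖(A F : ℝ → E) t‖ ∂(volume.restrict (Ioc (0:ℝ) T)) := stepC
      _ ≤ ∫ t, ‖(δ : ℝ → E) t‖ * (K * Φ t) ∂(volume.restrict (Ioc (0:ℝ) T)) := stepD
      _ = ∫ s, ‖(F : ℝ → E) s‖ * h s ∂(volume.restrict (Ioc (0:ℝ) T)) := stepE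
      _ = ∫ s in S, ‖(g : ℝ → E) s‖ * h s ∂(volume.restrict (Ioc (0:ℝ) T)) := stepF
  -- conclude (volume.restrict (Ioc (0:ℝ) T)) S = 0
  have hq1 : Integrable (fun t => ‖(g : ℝ → E) t‖ ^ 2) (volume.restrict (Ioc (0:ℝ) T)) :=
    (MeasureTheory.L2.integrable_inner (𝕜 := ℝ) g g).congr
      (Eventually.of_forall fun t => real_inner_self_eq_norm_sq _)
  have hq2 : Integrable (fun t => ‖(g : ℝ → E) t‖ * h t) (volume.restrict (Ioc (0:ℝ) T)) := by
    have : Integrable (fun t => h t * ‖(g : ℝ → E) t‖) (volume.restrict (Ioc (0:ℝ) T)) := by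
      refine Integrable.bdd_mul (c := K * ∫ s, ‖(δ : ℝ → E) s‖ ∂(volume.restrict (Ioc (0:ℝ) T))) hgint
        hmeas.aestronglyMeasurable ?_
      refine Eventually.of_forall fun t => ?_
      rw [Real.norm_eq_abs, abs_of_nonneg (hnonneg t)]
      exact hbdd t
    simpa [mul_comm] using this
  have hS0 : (volume.restrict (Ioc (0:ℝ) T)) S = 0 := by
    by_contra hpos
    have hne : 0 < (volume.restrict (Ioc (0:ℝ) T)) S := pos_iff_ne_zero.mpr hpos
    have hqint : IntegrableOn (fun t => ‖(g : ℝ → E) t‖ ^ 2 - ‖(g : ℝ → E) t‖ * h t) S (volume.restrict (Ioc (0:ℝ) T)) := (hq1.sub hq2).integrableOn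
    have hqle : ∫ t in S, (‖(g : ℝ → E) t‖ ^ 2 - ‖(g : ℝ → E) t‖ * h t) ∂(volume.restrict (Ioc (0:ℝ) T)) ≤ 0 := by
      rw [integral_sub hq1.integrableOn hq2.integrableOn]
      linarith [hfinal]
    have hqpos : 0 < ∫ t in S, (‖(g : ℝ → E) t‖ ^ 2 - ‖(g : ℝ → E) t‖ * h t) ∂(volume.restrict (Ioc (0:ℝ) T)) := by
      rw [setIntegral_pos_iff_support_of_nonneg_ae ?_ hqint]
      · refine lt_of_lt_of_le hne (measure_mono fun t ht => ⟨?_, ht⟩)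
        have h1 : h t < ‖(g : ℝ → E) t‖ := ht
        have h2 : 0 ≤ h t := hnonneg t
        simp only [Function.mem_support]
        intro hcon
        nlinarith
      · refine (ae_restrict_iff' hS).mpr (Eventually.of_forall fun t ht => ?_)
        have h1 : h t < ‖(g : ℝ → E) t‖ := ht
        have h2 : 0 ≤ h t := hnonneg t
        simp only [Pi.zero_apply]
        nlinarith
    linarith
  have hae : ∀ᵐ t ∂(volume.restrict (Ioc (0:ℝ) T)), ‖(g : ℝ → E) t‖ ≤ h t := by
    filter_upwards [measure_eq_zero_iff_ae_notMem.mp hS0] with t ht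
    exact not_lt.mp ht
  filter_upwards [hae, hmem] with t htle ht
  have hres : (volume.restrict (Ioc (0:ℝ) T)).restrict (Ioc t T) = volume.restrict (Ioc t T) := by
    rw [Measure.restrict_restrict measurableSet_Ioc, Ioc_inter_Ioc, min_self,
      max_eq_left ht.1.le]
  refine htle.trans (le_of_eq ?_)
  simp only [hhdef]
  rw [hres]
end

section
/- Let V be a real Hilbert space, W a real normed space, ι : V → W a compact linear operator, and F : W → ℝ a continuous function that is bounded from below. Then the functional G : V → ℝ, G(v) := F(ι v) + (1/2)‖v‖²_V, attains a global minimum: there exists v̄ ∈ V with G(v̄) ≤ G(v) for all v ∈ V. -/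
open Metric Set NormedSpace Filter

/-- A lower semicontinuous real-valued function on a nonempty compact space attains
its minimum. -/
theorem lsc_exists_min_aux {X : Type*} [TopologicalSpace X] [CompactSpace X] [Nonempty X]
    {f : X → ℝ} (hf : LowerSemicontinuous f) : ∃ x, ∀ y, f x ≤ f y := by
  by_contra h
  push_neg at h
  obtain ⟨t, ht⟩ := isCompact_univ.elim_finite_subcover
    (fun y : X => f ⁻¹' Set.Ioi (f y)) (fun y => hf.isOpen_preimage _)
    (fun x _ => by
      obtain ⟨y, hy⟩ := h x
      exact Set.mem_iUnion.2 ⟨y, hy⟩)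
  have htne : t.Nonempty := by
    obtain ⟨x⟩ := ‹Nonempty X›
    obtain ⟨y, hyt, -⟩ := Set.mem_iUnion₂.1 (ht (Set.mem_univ x))
    exact ⟨y, hyt⟩
  obtain ⟨y0, hy0t, hy0min⟩ := t.exists_min_image f htne
  obtain ⟨y, hyt, hylt⟩ := Set.mem_iUnion₂.1 (ht (Set.mem_univ y0))
  exact absurd (hy0min y hyt) (not_le.2 hylt)

/-- A function lower semicontinuous on a nonempty compact set attains its minimum there. -/
theorem lsc_exists_minOn_aux {X : Type*} [TopologicalSpace X] {s : Set X} (hs : IsCompact s)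
    (hne : s.Nonempty) {f : X → ℝ} (hf : LowerSemicontinuousOn f s) :
    ∃ x ∈ s, ∀ y ∈ s, f x ≤ f y := by
  haveI := isCompact_iff_compactSpace.mp hs
  haveI : Nonempty s := hne.to_subtype
  have hres : LowerSemicontinuous (s.restrict f) := by
    intro x t ht
    have h := hf x.1 x.2 t ht
    rw [← map_nhds_subtype_val] at h
    exact h
  obtain ⟨x, hx⟩ := lsc_exists_min_aux hres
  exact ⟨x.1, x.2, fun y hy => hx ⟨y, hy⟩⟩

/-- **Existence of a global minimizer for a Tikhonov-type functional composed with a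
compact operator.**  Let `V` be a real Hilbert space, `W` a real normed space,
`ι : V → W` a compact linear operator and `F : W → ℝ` continuous and bounded below.
Then `G(v) = F(ι v) + ½‖v‖²` attains a global minimum on `V`. -/
theorem exists_global_min_of_compact_composition
    {V W : Type*} [NormedAddCommGroup V] [InnerProductSpace ℝ V] [CompleteSpace V]
    [NormedAddCommGroup W] [NormedSpace ℝ W]
    (ι : V →L[ℝ] W) (hι : IsCompactOperator ι)
    (F : W → ℝ) (hF : Continuous F) (hbdd : BddBelow (Set.range F)) :
    ∃ vmin : V, ∀ v : V,
      F (ι vmin) + (1 / 2) * ‖vmin‖ ^ 2 ≤ F (ι v) + (1 / 2) * ‖v‖ ^ 2 := by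
  classical
  obtain ⟨b, hb⟩ := hbdd
  have hbF : ∀ w, b ≤ F w := fun w => hb ⟨w, rfl⟩
  set R : ℝ := Real.sqrt (2 * (F (ι 0) - b)) with hRdef
  have hR0 : 0 ≤ R := Real.sqrt_nonneg _
  have hRsq : R ^ 2 = 2 * (F (ι 0) - b) := Real.sq_sqrt (by nlinarith [hbF (ι 0)])
  -- the inverse of the Riesz isometry, from the weak-* dual back to `V`
  set Ψ : WeakDual ℝ V → V :=
    fun f => (InnerProductSpace.toDual ℝ V).symm (WeakDual.toStrongDual f) with hΨdef
  have hΨnorm : ∀ f : WeakDual ℝ V, ‖Ψ f‖ = ‖WeakDual.toStrongDual f‖ := fun f =>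
    (InnerProductSpace.toDual ℝ V).symm.norm_map _
  -- closed ball in the weak-* dual, compact by Banach–Alaoglu
  set K : Set (WeakDual ℝ V) := WeakDual.toStrongDual ⁻¹' Metric.closedBall 0 R with hKdef
  have hKcomp : IsCompact K := WeakDual.isCompact_closedBall (0 : StrongDual ℝ V) R
  have hKne : K.Nonempty := ⟨0, by simp [hKdef, hR0]⟩
  -- a compact set containing the image of the ball under the compact operator
  have hι' : IsCompactOperator ((ι : V →ₗ[ℝ] W) : V → W) := hι
  obtain ⟨C, hCcomp, hCsub⟩ := hι'.image_closedBall_subset_compact (𝕜₁ := ℝ) R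
  have hmemC : ∀ f : WeakDual ℝ V, f ∈ K → ι (Ψ f) ∈ C := by
    intro f hf
    refine hCsub ⟨Ψ f, ?_, rfl⟩
    rw [Metric.mem_closedBall, dist_zero_right, hΨnorm f]
    simpa [hKdef, Metric.mem_closedBall, dist_zero_right] using hf
  -- the weak topology on `W` is Hausdorff
  have hinjW : Function.Injective ((topDualPairing ℝ W).flip) := by
    intro x y hxy
    refine (NormedSpace.eq_iff_forall_dual_eq ℝ).2 fun g => ?_
    exact congrArg (fun φ => φ g) hxy
  haveI hT2W : T2Space (WeakSpace ℝ W) := (WeakBilin.isEmbedding hinjW).t2Space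
  -- the map `WeakDual ℝ V → WeakSpace ℝ W`, `f ↦ ι (Ψ f)`, is continuous
  have hχ : Continuous fun f : WeakDual ℝ V => (toWeakSpaceCLM ℝ W) (ι (Ψ f)) := by
    apply WeakBilin.continuous_of_continuous_eval
    intro y
    have hkey : (fun f : WeakDual ℝ V =>
          ((topDualPairing ℝ W).flip ((toWeakSpaceCLM ℝ W) (ι (Ψ f)))) y)
        = fun f : WeakDual ℝ V =>
          f ((InnerProductSpace.toDual ℝ V).symm (y.comp ι)) := by
      funext f
      show (y.comp ι) (Ψ f) = f ((InnerProductSpace.toDual ℝ V).symm (y.comp ι))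
      conv_lhs => rw [← (InnerProductSpace.toDual ℝ V).apply_symm_apply (y.comp ι)]
      rw [InnerProductSpace.toDual_apply_apply, real_inner_comm, ← InnerProductSpace.toDual_apply_apply,
        hΨdef]
      show (InnerProductSpace.toDual ℝ V)
        ((InnerProductSpace.toDual ℝ V).symm (WeakDual.toStrongDual f)) _ = _
      rw [(InnerProductSpace.toDual ℝ V).apply_symm_apply]
      rfl
    rw [hkey]
    exact WeakDual.eval_continuous _
  -- the composition `f ↦ ι (Ψ f)` is (norm-)continuous on the compact set `K`
  have hΦK : ContinuousOn (fun f : WeakDual ℝ V => ι (Ψ f)) K := by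
    rw [continuousOn_iff_continuous_restrict]
    haveI : CompactSpace C := isCompact_iff_compactSpace.mp hCcomp
    have hj := Continuous.isClosedEmbedding (f := fun c : C => (toWeakSpaceCLM ℝ W) (c : W))
        ((toWeakSpaceCLM ℝ W).continuous.comp continuous_subtype_val)
        (fun a b hab => Subtype.ext ((toWeakSpaceCLM_bijective (𝕜 := ℝ) (E := W)).injective hab))
    have hΦ' : Continuous (fun f : K => (⟨ι (Ψ f.1), hmemC f.1 f.2⟩ : C)) := by
      rw [hj.isEmbedding.continuous_iff]
      exact hχ.comp continuous_subtype_val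
    exact continuous_subtype_val.comp hΦ'
  -- the objective on the weak-* dual and its lower semicontinuity on `K`
  set g : WeakDual ℝ V → ℝ :=
    fun f => F (ι (Ψ f)) + (1 / 2) * ‖WeakDual.toStrongDual f‖ ^ 2 with hgdef
  have hg1 : LowerSemicontinuousOn (fun f : WeakDual ℝ V => F (ι (Ψ f))) K :=
    (hF.comp_continuousOn hΦK).lowerSemicontinuousOn
  have hg2 : LowerSemicontinuous
      fun f : WeakDual ℝ V => (1 / 2) * ‖WeakDual.toStrongDual f‖ ^ 2 := by
    rw [lowerSemicontinuous_iff_isClosed_preimage]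
    intro c
    rcases le_or_gt 0 c with hc | hc
    · have hset : (fun f : WeakDual ℝ V => (1 / 2) * ‖WeakDual.toStrongDual f‖ ^ 2) ⁻¹' Iic c
          = WeakDual.toStrongDual ⁻¹' Metric.closedBall 0 (Real.sqrt (2 * c)) := by
        ext f
        simp only [Set.mem_preimage, Set.mem_Iic, Metric.mem_closedBall, dist_zero_right]
        rw [Real.le_sqrt (norm_nonneg _) (by linarith)]
        constructor <;> intro h <;> linarith
      rw [hset]
      exact WeakDual.isClosed_closedBall 0 _
    · have hset : (fun f : WeakDual ℝ V => (1 / 2) * ‖WeakDual.toStrongDual f‖ ^ 2) ⁻¹' Iic c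
          = (∅ : Set (WeakDual ℝ V)) := by
        ext f
        simp only [Set.mem_preimage, Set.mem_Iic, Set.mem_empty_iff_false, iff_false, not_le]
        nlinarith [norm_nonneg (WeakDual.toStrongDual f), sq_nonneg ‖WeakDual.toStrongDual f‖]
      rw [hset]
      exact isClosed_empty
  have hglsc : LowerSemicontinuousOn g K := hg1.add (hg2.lowerSemicontinuousOn K)
  -- minimize over the compact set
  obtain ⟨f0, hf0K, hf0min⟩ := lsc_exists_minOn_aux hKcomp hKne hglsc
  refine ⟨Ψ f0, fun v => ?_⟩
  -- the lift of a vector of `V` into the weak-* dual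
  have hlift : ∀ v : V, ‖v‖ ≤ R →
      F (ι (Ψ f0)) + (1 / 2) * ‖Ψ f0‖ ^ 2 ≤ F (ι v) + (1 / 2) * ‖v‖ ^ 2 := by
    intro v hv
    set fv : WeakDual ℝ V :=
      StrongDual.toWeakDual (InnerProductSpace.toDual ℝ V v) with hfv
    have hΨfv : Ψ fv = v := by
      show (InnerProductSpace.toDual ℝ V).symm (WeakDual.toStrongDual fv) = v
      rw [hfv]
      exact (InnerProductSpace.toDual ℝ V).symm_apply_apply v
    have hnormfv : ‖WeakDual.toStrongDual fv‖ = ‖v‖ := by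
      rw [hfv]
      exact (InnerProductSpace.toDual ℝ V).norm_map v
    have hfvK : fv ∈ K := by
      simp only [hKdef, Set.mem_preimage, Metric.mem_closedBall, dist_zero_right]
      rw [hnormfv]; exact hv
    have := hf0min fv hfvK
    rw [hgdef] at this
    simp only [hΨfv, hnormfv, ← hΨnorm f0] at this
    exact this
  rcases le_or_gt ‖v‖ R with hv | hv
  · exact hlift v hv
  · have h0 : F (ι (Ψ f0)) + (1 / 2) * ‖Ψ f0‖ ^ 2 ≤ F (ι 0) + (1 / 2) * ‖(0 : V)‖ ^ 2 :=
      hlift 0 (by simpa using hR0)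
    have hnv : R ^ 2 < ‖v‖ ^ 2 := by nlinarith
    have hb2 : b ≤ F (ι v) := hbF _
    simp only [norm_zero] at h0
    nlinarith
end

section
/- Let V be a real Hilbert space, W a real normed space, ι : V → W a compact linear operator, and F : W → ℝ continuous. For each ε > 0 let F_ε : W → ℝ be continuous, and assume the continuous convergence property: F_ε(w_ε) → F(w) whenever w_ε → w in W as ε ↓ 0. Let x̄ ∈ V be a local minimizer of G(v) := F(ι v) + (1/2)‖v‖²_V with radius ρ > 0 (i.e., G(x̄) ≤ G(v) for all v with ‖v − x̄‖_V ≤ ρ). Then: (i) for each ε > 0 the penalized functional G_ε(v) := F_ε(ι v) + (1/2)‖v‖²_V + (1/2)‖v − x̄‖²_V attains a global minimum over the closed ball B_V(x̄, ρ) at some v_ε; and (ii) every such family satisfies v_ε → x̄ strongly in V as ε ↓ 0; in particular, for all sufficiently small ε, v_ε is a local minimizer of G_ε on V. -/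
open Filter Set
open scoped RealInnerProductSpace


private lemma ultra_lim_bdd {α : Type*} (U : Ultrafilter α) (g : α → ℝ) (C : ℝ)
    (h : ∀ᶠ a in (U : Filter α), g a ∈ Icc (-C) C) :
    ∃ l ∈ Icc (-C) C, Tendsto g (U : Filter α) (nhds l) := by
  have hle : (↑(U.map g) : Filter ℝ) ≤ 𝓟 (Icc (-C) C) := by
    rw [Ultrafilter.coe_map, le_principal_iff]
    exact h
  obtain ⟨l, hl, hl2⟩ := isCompact_Icc.ultrafilter_le_nhds (U.map g) hle
  refine ⟨l, hl, ?_⟩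
  rwa [Ultrafilter.coe_map] at hl2

private lemma exists_weak_limit {V : Type*} [NormedAddCommGroup V] [InnerProductSpace ℝ V]
    [CompleteSpace V] {α : Type*} (U : Ultrafilter α) (f : α → V) (C : ℝ)
    (hb : ∀ a, ‖f a‖ ≤ C) :
    ∃ v : V, ∀ u : V, Tendsto (fun a => ⟪f a, u⟫) (U : Filter α) (nhds ⟪v, u⟫) := by
  have key : ∀ u : V, ∃ l, l ∈ Icc (-(C * ‖u‖)) (C * ‖u‖) ∧
      Tendsto (fun a => ⟪f a, u⟫) (U : Filter α) (nhds l) := by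
    intro u
    have h : ∀ᶠ a in (U : Filter α), (fun a => ⟪f a, u⟫) a ∈ Icc (-(C * ‖u‖)) (C * ‖u‖) := by
      filter_upwards with a
      have h1 : |⟪f a, u⟫| ≤ ‖f a‖ * ‖u‖ := abs_real_inner_le_norm (f a) u
      have h2 : ‖f a‖ * ‖u‖ ≤ C * ‖u‖ :=
        mul_le_mul_of_nonneg_right (hb a) (norm_nonneg u)
      have := abs_le.mp (h1.trans h2)
      exact ⟨this.1, this.2⟩
    obtain ⟨l, hl, hl2⟩ := ultra_lim_bdd U _ _ h
    exact ⟨l, hl, hl2⟩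
  choose φ hφb hφ using key
  have hadd : ∀ u u', φ (u + u') = φ u + φ u' := by
    intro u u'
    refine tendsto_nhds_unique (hφ (u + u')) ?_
    have := (hφ u).add (hφ u')
    refine this.congr fun a => ?_
    rw [inner_add_right]
  have hsmul : ∀ (c : ℝ) u, φ (c • u) = c * φ u := by
    intro c u
    refine tendsto_nhds_unique (hφ (c • u)) ?_
    have := (hφ u).const_mul c
    refine this.congr fun a => ?_
    rw [real_inner_smul_right]
  let Φlin : V →ₗ[ℝ] ℝ :=
    { toFun := φ, map_add' := hadd, map_smul' := hsmul }
  have hbd : ∀ u, ‖Φlin u‖ ≤ C * ‖u‖ := by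
    intro u
    have := hφb u
    rw [Real.norm_eq_abs, abs_le]
    exact ⟨this.1, this.2⟩
  let Φ : V →L[ℝ] ℝ := Φlin.mkContinuous C hbd
  refine ⟨(InnerProductSpace.toDual ℝ V).symm Φ, fun u => ?_⟩
  have : ⟪(InnerProductSpace.toDual ℝ V).symm Φ, u⟫ = Φ u :=
    InnerProductSpace.toDual_symm_apply
  rw [this]
  exact hφ u


private lemma tendsto_compact_image {V W : Type*} [NormedAddCommGroup V]
    [InnerProductSpace ℝ V] [CompleteSpace V] [NormedAddCommGroup W] [NormedSpace ℝ W]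
    (ι : V →L[ℝ] W) (hι : IsCompactOperator ι) {α : Type*} (U : Ultrafilter α)
    (f : α → V) (C : ℝ) (hb : ∀ a, ‖f a‖ ≤ C) (v : V)
    (hw : ∀ u : V, Tendsto (fun a => ⟪f a, u⟫) (U : Filter α) (nhds ⟪v, u⟫)) :
    Tendsto (fun a => ι (f a)) (U : Filter α) (nhds (ι v)) := by
  have hι' : IsCompactOperator (ι.toLinearMap : V →ₗ[ℝ] W) := hι
  obtain ⟨K, hKcomp, hKsub⟩ := hι'.image_closedBall_subset_compact C
  have hmem : ∀ a, ι (f a) ∈ K := by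
    intro a
    refine hKsub ⟨f a, ?_, rfl⟩
    simpa [Metric.mem_closedBall, dist_zero_right] using hb a
  have hle : (↑(U.map fun a => ι (f a)) : Filter W) ≤ 𝓟 K := by
    rw [Ultrafilter.coe_map, le_principal_iff]
    exact mem_map.mpr (univ_mem' hmem)
  obtain ⟨w, hwK, hwle⟩ := hKcomp.ultrafilter_le_nhds _ hle
  have hconv : Tendsto (fun a => ι (f a)) (U : Filter α) (nhds w) := by
    rwa [Ultrafilter.coe_map] at hwle
  have hwe : w = ι v := by
    rw [NormedSpace.eq_iff_forall_dual_eq ℝ]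
    intro g
    have h1 : Tendsto (fun a => g (ι (f a))) (U : Filter α) (nhds (g w)) :=
      (g.continuous.tendsto w).comp hconv
    set z := (InnerProductSpace.toDual ℝ V).symm (g.comp ι) with hzdef
    have hz : ∀ x : V, ⟪z, x⟫ = g (ι x) := by
      intro x
      have : ⟪z, x⟫ = (g.comp ι) x := InnerProductSpace.toDual_symm_apply
      simpa using this
    have h2 : Tendsto (fun a => g (ι (f a))) (U : Filter α) (nhds (g (ι v))) := by
      have h3 := hw z
      have h4 : Tendsto (fun a => ⟪z, f a⟫) (U : Filter α) (nhds ⟪z, v⟫) := by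
        have hc : ⟪z, v⟫ = ⟪v, z⟫ := real_inner_comm _ _
        rw [hc]
        exact h3.congr (fun a => real_inner_comm _ _)
      refine Tendsto.congr (fun a => hz (f a)) ?_
      rw [← hz v]
      exact h4
    exact tendsto_nhds_unique h1 h2
  rwa [← hwe]


private lemma unif_conv {W : Type*} [NormedAddCommGroup W] [NormedSpace ℝ W]
    (F : W → ℝ) (hF : Continuous F) (Fε : ℝ → W → ℝ)
    (hconv : ∀ (w : W) (wε : ℝ → W),
      Tendsto wε (nhdsWithin 0 (Ioi 0)) (nhds w) →
      Tendsto (fun ε => Fε ε (wε ε)) (nhdsWithin 0 (Ioi 0)) (nhds (F w)))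
    {K : Set W} (hK : IsCompact K) {δ : ℝ} (hδ : 0 < δ) :
    ∀ᶠ ε in nhdsWithin 0 (Ioi 0), ∀ w ∈ K, |Fε ε w - F w| < δ := by
  classical
  by_contra hcon
  rw [Filter.not_eventually] at hcon
  have step : ∀ η : ℝ, 0 < η → ∃ p : ℝ × W,
      (0 < p.1 ∧ p.1 < η) ∧ p.2 ∈ K ∧ δ ≤ |Fε p.1 p.2 - F p.2| := by
    intro η hη
    obtain ⟨ε, hεm, hp⟩ := Filter.frequently_iff.mp hcon
      (Ioo_mem_nhdsGT_of_mem ⟨le_refl 0, hη⟩)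
    push_neg at hp
    obtain ⟨w, hwK, hwd⟩ := hp
    exact ⟨(ε, w), ⟨hεm.1, hεm.2⟩, hwK, hwd⟩
  choose q hq1 hq2 hq3 using step
  have hpos : ∀ (x : ℝ), 0 < x → ∀ n : ℕ, 0 < min x (1/(n+1 : ℝ)) := by
    intro x hx n
    exact lt_min hx (by positivity)
  let seq : ℕ → {x : ℝ × W // 0 < x.1} := fun n => Nat.rec
    (⟨q 1 one_pos, (hq1 1 one_pos).1⟩ : {x : ℝ × W // 0 < x.1})
    (fun n p => ⟨q (min p.1.1 (1/(n+1 : ℝ))) (hpos _ p.2 n), (hq1 _ _).1⟩) n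
  set E : ℕ → ℝ := fun n => (seq n).1.1 with hEdef
  set Wn : ℕ → W := fun n => (seq n).1.2 with hWdef
  have hEpos : ∀ n, 0 < E n := fun n => (seq n).2
  have hstep : ∀ n, E (n+1) < min (E n) (1/(n+1 : ℝ)) := by
    intro n
    exact (hq1 (min (E n) (1/(n+1 : ℝ))) (hpos _ (hEpos n) n)).2
  have hWK : ∀ n, Wn n ∈ K := by
    intro n
    cases n with
    | zero => exact hq2 1 one_pos
    | succ m => exact hq2 _ _
  have hδle : ∀ n, δ ≤ |Fε (E n) (Wn n) - F (Wn n)| := by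
    intro n
    cases n with
    | zero => exact hq3 1 one_pos
    | succ m => exact hq3 _ _
  have hdec : StrictAnti E :=
    strictAnti_nat_of_succ_lt fun n => (hstep n).trans_le (min_le_left _ _)
  have hE0 : Tendsto E atTop (nhds 0) := by
    refine squeeze_zero' (Eventually.of_forall fun n => (hEpos n).le) ?_
      tendsto_one_div_atTop_nhds_zero_nat
    refine eventually_atTop.mpr ⟨1, ?_⟩
    rintro (_ | m) hm
    · exact absurd hm (by omega)
    · have h1 := ((hstep m).trans_le (min_le_right _ _)).le
      refine h1.trans (le_of_eq ?_)
      push_cast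
      ring
  obtain ⟨winf, hwinfK, φ, hφmono, hφconv⟩ := hK.tendsto_subseq hWK
  let gfun : ℝ → W := fun ε => if h : ∃ k, E (φ k) = ε then Wn (φ (Nat.find h)) else winf
  have hg : ∀ k, gfun (E (φ k)) = Wn (φ k) := by
    intro k
    have h : ∃ j, E (φ j) = E (φ k) := ⟨k, rfl⟩
    have h1 : gfun (E (φ k)) = Wn (φ (Nat.find h)) := dif_pos h
    rw [h1]
    have heq : E (φ (Nat.find h)) = E (φ k) := Nat.find_spec h
    rw [hφmono.injective (hdec.injective heq)]
  have hgt : Tendsto gfun (nhdsWithin 0 (Ioi 0)) (nhds winf) := by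
    rw [Filter.tendsto_def]
    intro N hN
    obtain ⟨k₀, hk₀⟩ := eventually_atTop.mp (hφconv.eventually_mem hN)
    refine mem_of_superset (Ioo_mem_nhdsGT_of_mem ⟨le_refl 0, hEpos (φ k₀)⟩) ?_
    rintro ε ⟨hε0, hεlt⟩
    by_cases h : ∃ k, E (φ k) = ε
    · have h1 : gfun ε = Wn (φ (Nat.find h)) := dif_pos h
      rw [mem_preimage, h1]
      refine hk₀ _ ?_
      by_contra hlt
      push_neg at hlt
      have h2 : E (φ k₀) ≤ E (φ (Nat.find h)) := hdec.antitone (hφmono.monotone hlt.le)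
      rw [Nat.find_spec h] at h2
      exact absurd hεlt (not_lt.mpr h2)
    · have h1 : gfun ε = winf := dif_neg h
      rw [mem_preimage, h1]
      exact mem_of_mem_nhds hN
  have hseqL : Tendsto (fun k => E (φ k)) atTop (nhdsWithin 0 (Ioi 0)) := by
    refine tendsto_nhdsWithin_of_tendsto_nhds_of_eventually_within _ ?_ ?_
    · exact hE0.comp hφmono.tendsto_atTop
    · exact Eventually.of_forall fun k => hEpos (φ k)
  have h1 := (hconv winf gfun hgt).comp hseqL
  have h1' : Tendsto (fun k => Fε (E (φ k)) (Wn (φ k))) atTop (nhds (F winf)) := by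
    refine h1.congr fun k => ?_
    simp only [Function.comp_apply]
    rw [hg k]
  have h2 : Tendsto (fun k => F (Wn (φ k))) atTop (nhds (F winf)) :=
    (hF.tendsto winf).comp hφconv
  have h3 : Tendsto (fun k => Fε (E (φ k)) (Wn (φ k)) - F (Wn (φ k))) atTop (nhds 0) := by
    simpa using h1'.sub h2
  have h4 : ∀ᶠ k in atTop, |Fε (E (φ k)) (Wn (φ k)) - F (Wn (φ k))| < δ := by
    have := Metric.tendsto_nhds.mp h3 δ hδ
    refine this.mono fun k hk => ?_
    rwa [Real.dist_eq, sub_zero] at hk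
  obtain ⟨k, hk⟩ := h4.exists
  exact absurd (hδle (φ k)) (not_le.mpr hk)





private lemma package {V W : Type*} [NormedAddCommGroup V] [InnerProductSpace ℝ V]
    [CompleteSpace V] [NormedAddCommGroup W] [NormedSpace ℝ W]
    (ι : V →L[ℝ] W) (hι : IsCompactOperator ι) {α : Type*} (U : Ultrafilter α)
    (f : α → V) (xb : V) (ρ : ℝ) (hρ : 0 ≤ ρ) (hball : ∀ a, ‖f a - xb‖ ≤ ρ) :
    ∃ (v : V) (a b : ℝ),
      Tendsto (fun x => ι (f x)) (U : Filter α) (nhds (ι v)) ∧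
      Tendsto (fun x => ‖f x‖ ^ 2) (U : Filter α) (nhds a) ∧
      Tendsto (fun x => ‖f x - xb‖ ^ 2) (U : Filter α) (nhds b) ∧
      ‖v‖ ^ 2 ≤ a ∧ ‖v - xb‖ ^ 2 ≤ b ∧ b ≤ ρ ^ 2 ∧ ‖v - xb‖ ≤ ρ := by
  have hC : ∀ x, ‖f x‖ ≤ ‖xb‖ + ρ := by
    intro x
    have h1 : ‖f x‖ ≤ ‖f x - xb‖ + ‖xb‖ := by
      calc ‖f x‖ = ‖f x - xb + xb‖ := by rw [sub_add_cancel]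
        _ ≤ ‖f x - xb‖ + ‖xb‖ := norm_add_le _ _
    linarith [hball x]
  obtain ⟨v, hw⟩ := exists_weak_limit U f (‖xb‖ + ρ) hC
  have hιconv := tendsto_compact_image ι hι U f (‖xb‖ + ρ) hC v hw
  obtain ⟨a, haI, ha⟩ := ultra_lim_bdd U (fun x => ‖f x‖ ^ 2) ((‖xb‖ + ρ) ^ 2) (by
    filter_upwards with x
    have h0 : (0:ℝ) ≤ ‖f x‖ ^ 2 := by positivity
    have h1 : ‖f x‖ ^ 2 ≤ (‖xb‖ + ρ) ^ 2 := by
      have := hC x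
      nlinarith [norm_nonneg (f x)]
    exact ⟨by nlinarith, h1⟩)
  obtain ⟨b, hbI, hb⟩ := ultra_lim_bdd U (fun x => ‖f x - xb‖ ^ 2) (ρ ^ 2) (by
    filter_upwards with x
    have h0 : (0:ℝ) ≤ ‖f x - xb‖ ^ 2 := by positivity
    have h1 : ‖f x - xb‖ ^ 2 ≤ ρ ^ 2 := by
      have := hball x
      nlinarith [norm_nonneg (f x - xb)]
    exact ⟨by nlinarith, h1⟩)
  have hw' : ∀ u : V, Tendsto (fun x => ⟪f x - xb, u⟫) (U : Filter α) (nhds ⟪v - xb, u⟫) := by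
    intro u
    have h1 := (hw u).sub_const ⟪xb, u⟫
    have h2 : ⟪v - xb, u⟫ = ⟪v, u⟫ - ⟪xb, u⟫ := inner_sub_left _ _ _
    rw [h2]
    exact h1.congr fun x => (inner_sub_left _ _ _).symm
  have hva : ‖v‖ ^ 2 ≤ a := by
    have h1 : Tendsto (fun x => 2 * ⟪f x, v⟫ - ‖v‖ ^ 2) (U : Filter α) (nhds (‖v‖ ^ 2)) := by
      have h2 := ((hw v).const_mul 2).sub_const (‖v‖ ^ 2)
      have h3 : 2 * ⟪v, v⟫ - ‖v‖ ^ 2 = ‖v‖ ^ 2 := by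
        rw [real_inner_self_eq_norm_sq]; ring
      rwa [h3] at h2
    refine le_of_tendsto_of_tendsto' h1 ha fun x => ?_
    have h4 : ‖f x - v‖ ^ 2 = ‖f x‖ ^ 2 - 2 * ⟪f x, v⟫ + ‖v‖ ^ 2 := norm_sub_sq_real _ _
    nlinarith [sq_nonneg ‖f x - v‖]
  have hvb : ‖v - xb‖ ^ 2 ≤ b := by
    have h1 : Tendsto (fun x => 2 * ⟪f x - xb, v - xb⟫ - ‖v - xb‖ ^ 2) (U : Filter α)
        (nhds (‖v - xb‖ ^ 2)) := by
      have h2 := ((hw' (v - xb)).const_mul 2).sub_const (‖v - xb‖ ^ 2)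
      have h3 : 2 * ⟪v - xb, v - xb⟫ - ‖v - xb‖ ^ 2 = ‖v - xb‖ ^ 2 := by
        rw [real_inner_self_eq_norm_sq]; ring
      rwa [h3] at h2
    refine le_of_tendsto_of_tendsto' h1 hb fun x => ?_
    have h4 : ‖(f x - xb) - (v - xb)‖ ^ 2
        = ‖f x - xb‖ ^ 2 - 2 * ⟪f x - xb, v - xb⟫ + ‖v - xb‖ ^ 2 := norm_sub_sq_real _ _
    nlinarith [sq_nonneg ‖(f x - xb) - (v - xb)‖]
  have hbρ : b ≤ ρ ^ 2 := hbI.2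
  have hvρ : ‖v - xb‖ ≤ ρ := by
    nlinarith [norm_nonneg (v - xb), hvb, hbρ, hρ]
  exact ⟨v, a, b, hιconv, ha, hb, hva, hvb, hbρ, hvρ⟩

/-- **Adapted penalization (à la Barbu).**  Let `V` be a real Hilbert space, `ι : V → W`
a compact linear operator, `F : W → ℝ` continuous and `Fε` continuous approximations with
the continuous convergence property `Fε(wε) → F(w)` whenever `wε → w` as `ε ↓ 0`.  If `xb`
is a local minimizer of `G(v) = F(ι v) + ½‖v‖²` with radius `ρ`, then (i) for each `ε > 0`
the penalized functional `Gε(v) = Fε(ι v) + ½‖v‖² + ½‖v − xb‖²` has a global minimizer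
`vε` over the closed ball `B(xb,ρ)`, and (ii) any such family converges strongly to `xb`
as `ε ↓ 0`; in particular `vε` is a local minimizer of `Gε` on `V` for small `ε`. -/



theorem adapted_penalization
    {V W : Type*} [NormedAddCommGroup V] [InnerProductSpace ℝ V] [CompleteSpace V]
    [NormedAddCommGroup W] [NormedSpace ℝ W]
    (ι : V →L[ℝ] W) (hι : IsCompactOperator ι)
    (F : W → ℝ) (hF : Continuous F)
    (Fε : ℝ → W → ℝ) (hFε : ∀ ε : ℝ, 0 < ε → Continuous (Fε ε))
    (hconv : ∀ (w : W) (wε : ℝ → W),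
      Tendsto wε (nhdsWithin 0 (Ioi 0)) (nhds w) →
      Tendsto (fun ε => Fε ε (wε ε)) (nhdsWithin 0 (Ioi 0)) (nhds (F w)))
    (xb : V) (ρ : ℝ) (hρ : 0 < ρ)
    (hloc : ∀ v : V, ‖v - xb‖ ≤ ρ →
      F (ι xb) + (1 / 2) * ‖xb‖ ^ 2 ≤ F (ι v) + (1 / 2) * ‖v‖ ^ 2) :
    -- (i) existence of global minimizers of the penalized functional over the ball
    (∀ ε : ℝ, 0 < ε → ∃ v ∈ Metric.closedBall xb ρ, ∀ u ∈ Metric.closedBall xb ρ,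
      Fε ε (ι v) + (1 / 2) * ‖v‖ ^ 2 + (1 / 2) * ‖v - xb‖ ^ 2 ≤
        Fε ε (ι u) + (1 / 2) * ‖u‖ ^ 2 + (1 / 2) * ‖u - xb‖ ^ 2) ∧
    -- (ii) strong convergence of any such family, and local minimality for small ε
    (∀ vε : ℝ → V,
      (∀ ε : ℝ, 0 < ε → vε ε ∈ Metric.closedBall xb ρ ∧
        ∀ u ∈ Metric.closedBall xb ρ,
          Fε ε (ι (vε ε)) + (1 / 2) * ‖vε ε‖ ^ 2 + (1 / 2) * ‖vε ε - xb‖ ^ 2 ≤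
            Fε ε (ι u) + (1 / 2) * ‖u‖ ^ 2 + (1 / 2) * ‖u - xb‖ ^ 2) →
      Tendsto vε (nhdsWithin 0 (Ioi 0)) (nhds xb) ∧
      ∃ ε₀ > (0:ℝ), ∀ ε : ℝ, 0 < ε → ε ≤ ε₀ → ∃ δ > (0:ℝ), ∀ u : V, ‖u - vε ε‖ ≤ δ →
        Fε ε (ι (vε ε)) + (1 / 2) * ‖vε ε‖ ^ 2 + (1 / 2) * ‖vε ε - xb‖ ^ 2 ≤
          Fε ε (ι u) + (1 / 2) * ‖u‖ ^ 2 + (1 / 2) * ‖u - xb‖ ^ 2) := by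
  have hι' : IsCompactOperator (ι.toLinearMap : V →ₗ[ℝ] W) := hι
  obtain ⟨K, hKcomp, hKsub⟩ := hι'.image_closedBall_subset_compact (‖xb‖ + ρ)
  have hmemK : ∀ v : V, ‖v - xb‖ ≤ ρ → ι v ∈ K := by
    intro v hv
    refine hKsub ⟨v, ?_, rfl⟩
    rw [Metric.mem_closedBall, dist_zero_right]
    have h1 : ‖v‖ ≤ ‖v - xb‖ + ‖xb‖ := by
      calc ‖v‖ = ‖v - xb + xb‖ := by rw [sub_add_cancel]
        _ ≤ ‖v - xb‖ + ‖xb‖ := norm_add_le _ _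
    linarith
  constructor
  · -- part (i)
    intro ε hε
    set S := Metric.closedBall xb ρ with hS
    set G : V → ℝ := fun v => Fε ε (ι v) + (1 / 2) * ‖v‖ ^ 2 + (1 / 2) * ‖v - xb‖ ^ 2 with hG
    have hball : ∀ v, v ∈ S → ‖v - xb‖ ≤ ρ := by
      intro v hv
      rwa [hS, Metric.mem_closedBall, dist_eq_norm] at hv
    have hKne : K.Nonempty := ⟨ι xb, hmemK xb (by simp [hρ.le])⟩
    obtain ⟨w₀, hw₀K, hw₀min'⟩ := hKcomp.exists_isMinOn hKne (hFε ε hε).continuousOn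
    have hw₀min := isMinOn_iff.mp hw₀min'
    have hbdd : BddBelow (G '' S) := by
      refine ⟨Fε ε w₀, ?_⟩
      rintro y ⟨v, hv, rfl⟩
      have h1 := hw₀min (ι v) (hmemK v (hball v hv))
      have h2 : (0:ℝ) ≤ (1 / 2) * ‖v‖ ^ 2 := by positivity
      have h3 : (0:ℝ) ≤ (1 / 2) * ‖v - xb‖ ^ 2 := by positivity
      simp only [hG]
      linarith
    have hSne : (G '' S).Nonempty :=
      ⟨G xb, xb, Metric.mem_closedBall_self hρ.le, rfl⟩
    set m := sInf (G '' S) with hm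
    have hmle : ∀ u ∈ S, m ≤ G u := fun u hu => csInf_le hbdd ⟨u, hu, rfl⟩
    have hseq : ∀ n : ℕ, ∃ v ∈ S, G v < m + 1 / (n + 1 : ℝ) := by
      intro n
      have hlt : m < m + 1 / (n + 1 : ℝ) := by
        have : (0:ℝ) < 1 / (n + 1 : ℝ) := by positivity
        linarith
      obtain ⟨y, ⟨v, hv, rfl⟩, hy⟩ := exists_lt_of_csInf_lt hSne hlt
      exact ⟨v, hv, hy⟩
    choose vs hvsS hvslt using hseq
    have hGconv : Tendsto (fun n => G (vs n)) atTop (nhds m) := by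
      refine tendsto_of_tendsto_of_tendsto_of_le_of_le (g := fun _ => m)
        (h := fun n : ℕ => m + 1 / (n + 1 : ℝ)) tendsto_const_nhds ?_
        (fun n => hmle _ (hvsS n)) (fun n => (hvslt n).le)
      have h1 := tendsto_one_div_add_atTop_nhds_zero_nat (𝕜 := ℝ)
      have h2 := tendsto_const_nhds (x := m) (f := atTop (α := ℕ)) |>.add h1
      simpa using h2
    let 𝒰 : Ultrafilter ℕ := Ultrafilter.of atTop
    have h𝒰le : (𝒰 : Filter ℕ) ≤ atTop := Ultrafilter.of_le atTop
    obtain ⟨v, a, b, hιconv, ha, hb, hva, hvb, hbρ, hvρ⟩ :=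
      package ι hι 𝒰 vs xb ρ hρ.le (fun n => hball _ (hvsS n))
    have hFconv : Tendsto (fun n => Fε ε (ι (vs n))) (𝒰 : Filter ℕ) (nhds (Fε ε (ι v))) :=
      ((hFε ε hε).tendsto _).comp hιconv
    have hsum : Tendsto (fun n => G (vs n)) (𝒰 : Filter ℕ)
        (nhds (Fε ε (ι v) + (1 / 2) * a + (1 / 2) * b)) :=
      (hFconv.add (ha.const_mul (1 / 2))).add (hb.const_mul (1 / 2))
    have hmeq : m = Fε ε (ι v) + (1 / 2) * a + (1 / 2) * b :=
      tendsto_nhds_unique (hGconv.mono_left h𝒰le) hsum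
    have hvS : v ∈ S := by
      rw [hS, Metric.mem_closedBall, dist_eq_norm]
      exact hvρ
    refine ⟨v, hvS, fun u hu => ?_⟩
    have hGv : G v ≤ m := by
      rw [hmeq]
      simp only [hG]
      linarith
    exact hGv.trans (hmle u hu)
  · -- part (ii)
    intro vε hfam
    set L := nhdsWithin (0:ℝ) (Ioi 0) with hLdef
    set vt : ℝ → V := fun ε => if 0 < ε then vε ε else xb with hvt
    have hball : ∀ ε, ‖vt ε - xb‖ ≤ ρ := by
      intro ε
      by_cases h : 0 < ε
      · simp only [hvt, if_pos h]
        have := (hfam ε h).1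
        rwa [Metric.mem_closedBall, dist_eq_norm] at this
      · simp only [hvt, if_neg h]
        simp [hρ.le]
    have hkey : ∀ ε, 0 < ε →
        Fε ε (ι (vt ε)) + (1 / 2) * ‖vt ε‖ ^ 2 + (1 / 2) * ‖vt ε - xb‖ ^ 2 ≤
          Fε ε (ι xb) + (1 / 2) * ‖xb‖ ^ 2 := by
      intro ε hε
      have h := (hfam ε hε).2 xb (Metric.mem_closedBall_self hρ.le)
      simp only [hvt, if_pos hε]
      simpa using h
    have hxbconv : Tendsto (fun ε => Fε ε (ι xb)) L (nhds (F (ι xb))) :=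
      hconv (ι xb) (fun _ => ι xb) tendsto_const_nhds
    have htend : Tendsto vt L (nhds xb) := by
      rw [Filter.tendsto_iff_ultrafilter]
      intro U hU
      obtain ⟨v, a, b, hιconv, ha, hb, hva, hvb, hbρ, hvρ⟩ :=
        package ι hι U vt xb ρ hρ.le hball
      have hFconv : Tendsto (fun ε => Fε ε (ι (vt ε))) (U : Filter ℝ) (nhds (F (ι v))) := by
        rw [Metric.tendsto_nhds]
        intro δ hδ
        have h1 : ∀ᶠ ε in (U : Filter ℝ), ∀ w ∈ K, |Fε ε w - F w| < δ / 2 :=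
          (unif_conv F hF Fε hconv hKcomp (half_pos hδ)).filter_mono hU
        have h2 : ∀ᶠ ε in (U : Filter ℝ), |F (ι (vt ε)) - F (ι v)| < δ / 2 := by
          have h3 := (hF.tendsto (ι v)).comp hιconv
          have h4 := Metric.tendsto_nhds.mp h3 (δ / 2) (half_pos hδ)
          simpa [Real.dist_eq] using h4
        filter_upwards [h1, h2] with ε hε1 hε2
        rw [Real.dist_eq]
        have h5 := hε1 (ι (vt ε)) (hmemK _ (hball ε))
        calc |Fε ε (ι (vt ε)) - F (ι v)|
            ≤ |Fε ε (ι (vt ε)) - F (ι (vt ε))| + |F (ι (vt ε)) - F (ι v)| := abs_sub_le _ _ _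
          _ < δ / 2 + δ / 2 := add_lt_add h5 hε2
          _ = δ := add_halves δ
      have hLHS : Tendsto
          (fun ε => Fε ε (ι (vt ε)) + (1 / 2) * ‖vt ε‖ ^ 2 + (1 / 2) * ‖vt ε - xb‖ ^ 2)
          (U : Filter ℝ) (nhds (F (ι v) + (1 / 2) * a + (1 / 2) * b)) :=
        (hFconv.add (ha.const_mul (1 / 2))).add (hb.const_mul (1 / 2))
      have hRHS : Tendsto (fun ε => Fε ε (ι xb) + (1 / 2) * ‖xb‖ ^ 2) (U : Filter ℝ)
          (nhds (F (ι xb) + (1 / 2) * ‖xb‖ ^ 2)) :=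
        (hxbconv.mono_left hU).add tendsto_const_nhds
      have hpos : ∀ᶠ ε in (U : Filter ℝ), 0 < ε := by
        have : Ioi (0:ℝ) ∈ (U : Filter ℝ) := hU self_mem_nhdsWithin
        filter_upwards [this] with ε hε using hε
      have hfinal : F (ι v) + (1 / 2) * a + (1 / 2) * b ≤ F (ι xb) + (1 / 2) * ‖xb‖ ^ 2 := by
        refine le_of_tendsto_of_tendsto hLHS hRHS ?_
        filter_upwards [hpos] with ε hε using hkey ε hε
      have hlocv := hloc v hvρ
      have hbnn : 0 ≤ b := by
        have h0 : (0:ℝ) ≤ ‖v - xb‖ ^ 2 := by positivity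
        linarith
      have hbz : b ≤ 0 := by linarith
      have hb0 : b = 0 := le_antisymm hbz hbnn
      have hsqconv : Tendsto (fun ε => ‖vt ε - xb‖ ^ 2) (U : Filter ℝ) (nhds 0) := hb0 ▸ hb
      have hnt : Tendsto (fun ε => ‖vt ε - xb‖) (U : Filter ℝ) (nhds 0) := by
        have h6 := (Real.continuous_sqrt.tendsto 0).comp hsqconv
        rw [Real.sqrt_zero] at h6
        refine Tendsto.congr (fun ε => ?_) h6
        simp only [Function.comp_apply]
        exact Real.sqrt_sq (norm_nonneg _)
      rw [tendsto_iff_dist_tendsto_zero]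
      exact hnt.congr fun ε => (dist_eq_norm _ _).symm
    have htendv : Tendsto vε L (nhds xb) := by
      refine htend.congr' ?_
      filter_upwards [self_mem_nhdsWithin] with ε hε
      simp only [hvt, if_pos (mem_Ioi.mp hε)]
    refine ⟨htendv, ?_⟩
    have hev : vε ⁻¹' Metric.ball xb ρ ∈ L := htendv (Metric.ball_mem_nhds xb hρ)
    rw [hLdef, Metric.mem_nhdsWithin_iff] at hev
    obtain ⟨η, hη, hsub⟩ := hev
    refine ⟨η / 2, by positivity, ?_⟩
    intro ε hε0 hεle
    have hεmem : ε ∈ Metric.ball (0:ℝ) η ∩ Ioi 0 := by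
      constructor
      · rw [Metric.mem_ball, Real.dist_eq, sub_zero, abs_of_pos hε0]
        linarith
      · exact hε0
    have hdist : dist (vε ε) xb < ρ := hsub hεmem
    refine ⟨ρ - dist (vε ε) xb, by linarith, ?_⟩
    intro u hu
    refine (hfam ε hε0).2 u ?_
    rw [Metric.mem_closedBall]
    have h7 : dist u (vε ε) = ‖u - vε ε‖ := dist_eq_norm _ _
    calc dist u xb ≤ dist u (vε ε) + dist (vε ε) xb := dist_triangle _ _ _
      _ ≤ (ρ - dist (vε ε) xb) + dist (vε ε) xb := by rw [h7]; linarith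
      _ = ρ := by ring
end
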